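/- arXiv:0810.2053 — 4 statements merged into one kernel-verified Lean document; each statement's English description precedes it below -/
import Mathlib

section
/- There exists an absolute constant c > 0 such that every finite simple d-regular graph contains a star factor in which every star has at least c·d/log d edges, for all sufficiently large d. -/
open Finset

namespace StarLLL

noncomputable section
open Classical

/-- real-valued indicator of a proposition -/
def ind (P : Prop) : ℝ := if P then 1 else 0

lemma ind_of {P : Prop} (h : P) : ind P = 1 := if_pos h
lemma ind_of_not {P : Prop} (h : ¬ P) : ind P = 0 := if_neg h
lemma ind_nonneg (P : Prop) : 0 ≤ ind P := by unfold ind; split <;> norm_num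
lemma ind_le_one (P : Prop) : ind P ≤ 1 := by unfold ind; split <;> norm_num
lemma ind_congr {P Q : Prop} (h : P ↔ Q) : ind P = ind Q := by
  by_cases hP : P
  · rw [ind_of hP, ind_of (h.1 hP)]
  · rw [ind_of_not hP, ind_of_not (fun hq => hP (h.2 hq))]
lemma ind_le_ind {P Q : Prop} (h : P → Q) : ind P ≤ ind Q := by
  by_cases hP : P
  · rw [ind_of hP, ind_of (h hP)]
  · rw [ind_of_not hP]; exact ind_nonneg Q
lemma ind_mul_ind (P Q : Prop) : ind P * ind Q = ind (P ∧ Q) := by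
  by_cases hP : P <;> by_cases hQ : Q
  · rw [ind_of hP, ind_of hQ, ind_of (⟨hP, hQ⟩ : P ∧ Q), one_mul]
  · rw [ind_of_not hQ, mul_zero, ind_of_not (fun h => hQ h.2)]
  · rw [ind_of_not hP, zero_mul, ind_of_not (fun h => hP h.1)]
  · rw [ind_of_not hP, zero_mul, ind_of_not (fun h => hP h.1)]
lemma ind_add_ind_not (P Q : Prop) : ind (P ∧ Q) + ind (P ∧ ¬ Q) = ind P := by
  by_cases hP : P <;> by_cases hQ : Q
  · rw [ind_of (⟨hP, hQ⟩ : P ∧ Q), ind_of_not (fun h => h.2 hQ), ind_of hP, add_zero]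
  · rw [ind_of_not (fun h : P ∧ Q => hQ h.2), ind_of (⟨hP, hQ⟩ : P ∧ ¬ Q), ind_of hP, zero_add]
  · rw [ind_of_not (fun h : P ∧ Q => hP h.1), ind_of_not (fun h : P ∧ ¬ Q => hP h.1),
      ind_of_not hP, add_zero]
  · rw [ind_of_not (fun h : P ∧ Q => hP h.1), ind_of_not (fun h : P ∧ ¬ Q => hP h.1),
      ind_of_not hP, add_zero]

variable {V : Type} [Fintype V] [DecidableEq V]

/-- weight of an outcome in the product Bernoulli(p) space on `V → Bool` -/
def wt (p : ℝ) (ω : V → Bool) : ℝ := ∏ v : V, (if ω v then p else 1 - p)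

/-- probability of an event -/
def Pr (p : ℝ) (E : (V → Bool) → Prop) : ℝ :=
  ∑ ω : V → Bool, ind (E ω) * wt p ω

variable {p : ℝ}

lemma wt_nonneg (h0 : 0 ≤ p) (h1 : p ≤ 1) (ω : V → Bool) : 0 ≤ wt p ω :=
  Finset.prod_nonneg fun v _ => by split <;> linarith

lemma Pr_nonneg (h0 : 0 ≤ p) (h1 : p ≤ 1) (E : (V → Bool) → Prop) : 0 ≤ Pr p E :=
  Finset.sum_nonneg fun ω _ => mul_nonneg (ind_nonneg _) (wt_nonneg h0 h1 ω)

lemma sum_prod_bool (h : V → Bool → ℝ) :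
    ∑ ω : V → Bool, ∏ v : V, h v (ω v) = ∏ v : V, (h v false + h v true) := by
  rw [← Fintype.piFinset_univ, Finset.sum_prod_piFinset]
  apply Finset.prod_congr rfl
  intro v _
  rw [show (∑ j ∈ (Finset.univ : Finset Bool), h v j) = ∑ j : Bool, h v j from rfl]
  rw [Fintype.sum_bool]
  exact add_comm _ _

lemma sum_wt : ∑ ω : V → Bool, wt p ω = 1 := by
  have h := sum_prod_bool (V := V) (fun _ b => if b then p else 1 - p)
  rw [show (∑ ω : V → Bool, wt p ω)
      = ∑ ω : V → Bool, ∏ v : V, (fun (_ : V) (b : Bool) => if b then p else 1 - p) v (ω v)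
      from rfl, h]
  simp

lemma Pr_true : Pr p (fun _ : V → Bool => True) = 1 := by
  unfold Pr
  rw [show (∑ ω : V → Bool, ind True * wt p ω) = ∑ ω : V → Bool, wt p ω from
    Finset.sum_congr rfl fun ω _ => by rw [ind_of trivial, one_mul]]
  exact sum_wt

lemma Pr_congr {E F : (V → Bool) → Prop} (h : ∀ ω, E ω ↔ F ω) : Pr p E = Pr p F :=
  Finset.sum_congr rfl fun ω _ => by rw [ind_congr (h ω)]

lemma Pr_mono (h0 : 0 ≤ p) (h1 : p ≤ 1) {E F : (V → Bool) → Prop}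
    (h : ∀ ω, E ω → F ω) : Pr p E ≤ Pr p F :=
  Finset.sum_le_sum fun ω _ =>
    mul_le_mul_of_nonneg_right (ind_le_ind (h ω)) (wt_nonneg h0 h1 ω)

lemma Pr_split (E F : (V → Bool) → Prop) :
    Pr p E = Pr p (fun ω => E ω ∧ F ω) + Pr p (fun ω => E ω ∧ ¬ F ω) := by
  unfold Pr
  rw [← Finset.sum_add_distrib]
  apply Finset.sum_congr rfl
  intro ω _
  rw [← add_mul, ind_add_ind_not]

lemma Pr_union_le (h0 : 0 ≤ p) (h1 : p ≤ 1) {ι : Type*} (s : Finset ι)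
    (Q : ι → (V → Bool) → Prop) :
    Pr p (fun ω => ∃ i ∈ s, Q i ω) ≤ ∑ i ∈ s, Pr p (Q i) := by
  have key : ∑ i ∈ s, Pr p (Q i)
      = ∑ ω : V → Bool, (∑ i ∈ s, ind (Q i ω)) * wt p ω := by
    unfold Pr
    rw [Finset.sum_comm]
    apply Finset.sum_congr rfl
    intro ω _
    rw [Finset.sum_mul]
  rw [key]
  apply Finset.sum_le_sum
  intro ω _
  apply mul_le_mul_of_nonneg_right _ (wt_nonneg h0 h1 ω)
  by_cases hE : ∃ i ∈ s, Q i ω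
  · obtain ⟨i, hi, hQ⟩ := hE
    rw [ind_of ⟨i, hi, hQ⟩]
    calc (1 : ℝ) = ind (Q i ω) := (ind_of hQ).symm
      _ ≤ ∑ j ∈ s, ind (Q j ω) :=
          Finset.single_le_sum (f := fun j => ind (Q j ω)) (fun j _ => ind_nonneg _) hi
  · rw [ind_of_not hE]
    exact Finset.sum_nonneg fun j _ => ind_nonneg _

lemma Pr_exists_of_pos {E : (V → Bool) → Prop} (h : 0 < Pr p E) : ∃ ω, E ω := by
  by_contra hc
  push_neg at hc
  have hz : Pr p E = 0 :=
    Finset.sum_eq_zero fun ω _ => by rw [ind_of_not (hc ω), zero_mul]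
  rw [hz] at h
  exact lt_irrefl 0 h

/-- an event determined by the coordinates in `s` -/
def DetOn (s : Finset V) (E : (V → Bool) → Prop) : Prop :=
  ∀ ω ω' : V → Bool, (∀ v ∈ s, ω v = ω' v) → (E ω ↔ E ω')

/-- merge two outcomes along `s` -/
def mg (s : Finset V) (ω ω' : V → Bool) : V → Bool := fun v => if v ∈ s then ω v else ω' v

lemma Pr_indep (h0 : 0 ≤ p) (h1 : p ≤ 1) {s t : Finset V} {E F : (V → Bool) → Prop}
    (hE : DetOn s E) (hF : DetOn t F) (hst : Disjoint s t) :
    Pr p (fun ω => E ω ∧ F ω) = Pr p E * Pr p F := by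
  have key : Pr p E * Pr p F
      = ∑ x : (V → Bool) × (V → Bool),
          (ind (E x.1) * wt p x.1) * (ind (F x.2) * wt p x.2) := by
    rw [Fintype.sum_prod_type]
    rw [Pr, Pr, Finset.sum_mul_sum]
  rw [key]
  have hbij : Function.Bijective (fun x : (V → Bool) × (V → Bool) =>
      (mg s x.1 x.2, mg s x.2 x.1)) := by
    apply Function.Involutive.bijective
    rintro ⟨a, b⟩
    simp only [Prod.mk.injEq]
    constructor <;> funext v <;> by_cases hv : v ∈ s <;> simp [mg, hv]
  rw [Fintype.sum_bijective _ hbij _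
    (fun y : (V → Bool) × (V → Bool) =>
      (ind (E y.1 ∧ F y.1) * wt p y.1) * wt p y.2) ?_]
  · rw [Fintype.sum_prod_type]
    have hsum : ∀ σ : V → Bool, ∑ τ : V → Bool,
        (ind (E σ ∧ F σ) * wt p σ) * wt p τ
        = ind (E σ ∧ F σ) * wt p σ := by
      intro σ
      rw [← Finset.mul_sum, sum_wt, mul_one]
    rw [Finset.sum_congr rfl fun σ _ => hsum σ]
    rfl
  · rintro ⟨ω, ω'⟩
    dsimp only
    set σ := mg s ω ω' with hσ
    set τ := mg s ω' ω with hτ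
    have hEσ : E ω ↔ E σ := hE ω σ (fun v hv => by simp [σ, mg, hv])
    have hFσ : F ω' ↔ F σ := by
      apply hF
      intro v hv
      have hvs : v ∉ s := fun hvs => (Finset.disjoint_left.1 hst hvs) hv
      simp [σ, mg, hvs]
    have hw : wt p ω * wt p ω' = wt p σ * wt p τ := by
      unfold wt
      rw [← Finset.prod_mul_distrib, ← Finset.prod_mul_distrib]
      apply Finset.prod_congr rfl
      intro v _
      by_cases hv : v ∈ s
      · simp [σ, τ, mg, hv]
      · simp [σ, τ, mg, hv, mul_comm]
    calc (ind (E ω) * wt p ω) * (ind (F ω') * wt p ω')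
        = (ind (E ω) * ind (F ω')) * (wt p ω * wt p ω') := by ring
      _ = (ind (E σ ∧ F σ) * wt p σ) * wt p τ := by
          rw [ind_congr hEσ, ind_congr hFσ, ind_mul_ind, hw]; ring

lemma Pr_cyl (s : Finset V) (b : Bool) :
    Pr p (fun ω => ∀ v ∈ s, ω v = b) = (if b then p else 1 - p) ^ s.card := by
  have step : ∀ ω : V → Bool, ind (∀ v ∈ s, ω v = b) * wt p ω
      = ∏ v : V, (fun v c => if v ∈ s then (if c = b then (if c then p else 1 - p) else 0)
          else (if c then p else 1 - p)) v (ω v) := by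
    intro ω
    by_cases hE : ∀ v ∈ s, ω v = b
    · rw [ind_of hE, one_mul]
      apply Finset.prod_congr rfl
      intro v _
      dsimp only
      by_cases hv : v ∈ s
      · rw [if_pos hv, if_pos (hE v hv)]
      · rw [if_neg hv]
    · rw [ind_of_not hE, zero_mul]
      push_neg at hE
      obtain ⟨v, hv, hne⟩ := hE
      symm
      apply Finset.prod_eq_zero (Finset.mem_univ v)
      dsimp only
      rw [if_pos hv, if_neg hne]
  have hsp := sum_prod_bool (V := V) (fun v c => if v ∈ s then (if c = b then (if c then p else 1 - p) else 0)
          else (if c then p else 1 - p))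
  unfold Pr
  rw [Finset.sum_congr rfl (fun ω _ => step ω), hsp]
  have hfact : ∀ v : V, ((if v ∈ s then (if (false : Bool) = b then (if (false : Bool) then p else 1 - p) else 0)
          else (if (false : Bool) then p else 1 - p)) +
        (if v ∈ s then (if (true : Bool) = b then (if (true : Bool) then p else 1 - p) else 0)
          else (if (true : Bool) then p else 1 - p)))
      = (if v ∈ s then (if b then p else 1 - p) else 1) := by
    intro v
    by_cases hv : v ∈ s <;> cases b <;> simp [hv] <;> ring
  rw [Finset.prod_congr rfl (fun v _ => hfact v), Finset.prod_ite_mem, Finset.univ_inter, Finset.prod_const]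

end
end StarLLL
namespace StarLLL
noncomputable section
open Classical Finset

variable {V : Type} [Fintype V] [DecidableEq V] {p : ℝ}

lemma Pr_false : Pr p (fun _ : V → Bool => False) = 0 :=
  Finset.sum_eq_zero fun ω _ => by rw [ind_of_not not_false, zero_mul]

section LLL

variable {ι : Type} [Fintype ι] (A : ι → (V → Bool) → Prop) (S : ι → Finset V)

/-- "none of the events indexed by `F` occurs" -/
def NE (F : Finset ι) (ω : V → Bool) : Prop := ∀ j ∈ F, ¬ A j ω

lemma Pr_NE_empty : Pr p (NE A (∅ : Finset ι)) = 1 := by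
  rw [Pr_congr (F := fun _ : V → Bool => True) (fun ω => by simp [NE])]
  exact Pr_true

theorem LLL_aux (h0 : 0 ≤ p) (h1 : p ≤ 1) (hdet : ∀ i, DetOn (S i) (A i))
    (D : ℕ) (hD : ∀ i, (univ.filter fun j => j ≠ i ∧ ¬ Disjoint (S i) (S j)).card ≤ D)
    (p₀ : ℝ) (hp₀0 : 0 ≤ p₀) (hp₀ : ∀ i, Pr p (A i) ≤ p₀)
    (hcond : p₀ * ((D : ℝ) + 2)^2 ≤ 1) :
    ∀ n (F : Finset ι), F.card ≤ n →
      0 < Pr p (NE A F) ∧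
        ∀ i, Pr p (fun ω => A i ω ∧ NE A F ω) ≤ (1/((D : ℝ)+2)) * Pr p (NE A F) := by
  have he : (0 : ℝ) < (D : ℝ) + 2 := by positivity
  set x : ℝ := 1/((D : ℝ)+2) with hx
  have hxe : x * ((D : ℝ)+2) = 1 := one_div_mul_cancel he.ne'
  have hx0 : 0 < x := by positivity
  have hxhalf : x ≤ 1/2 := by
    rw [hx]
    apply div_le_div_of_nonneg_left (by norm_num) (by norm_num)
    have : (0:ℝ) ≤ (D:ℝ) := Nat.cast_nonneg D
    linarith
  have hp₀x : p₀ ≤ x := by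
    rw [hx, le_div_iff₀ he]
    nlinarith [hp₀0, he]
  intro n
  induction n with
  | zero =>
    intro F hF
    have hFe : F = ∅ := Finset.card_eq_zero.1 (Nat.le_zero.1 hF)
    subst hFe
    rw [Pr_NE_empty]
    refine ⟨one_pos, fun i => ?_⟩
    rw [mul_one]
    calc Pr p (fun ω => A i ω ∧ NE A (∅ : Finset ι) ω)
        = Pr p (A i) := Pr_congr (fun ω => by simp [NE])
      _ ≤ p₀ := hp₀ i
      _ ≤ x := hp₀x
  | succ n IH =>
    intro F hF
    -- Part 2 first
    have part2 : ∀ i, Pr p (fun ω => A i ω ∧ NE A F ω) ≤ x * Pr p (NE A F) := by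
      intro i
      by_cases hiF : i ∈ F
      · have hzero : Pr p (fun ω => A i ω ∧ NE A F ω) = 0 := by
          rw [Pr_congr (F := fun _ : V → Bool => False)
            (fun ω => ⟨fun h => h.2 i hiF h.1, False.elim⟩), Pr_false]
        rw [hzero]
        exact mul_nonneg hx0.le (Pr_nonneg h0 h1 _)
      · set S₁ := F.filter (fun j => ¬ Disjoint (S i) (S j)) with hS₁def
        set S₂ := F.filter (fun j => Disjoint (S i) (S j)) with hS₂def
        have hS₁card : (S₁.card : ℝ) ≤ (D : ℝ) := by
          have hsub : S₁ ⊆ univ.filter fun j => j ≠ i ∧ ¬ Disjoint (S i) (S j) := by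
            intro j hj
            rw [hS₁def, Finset.mem_filter] at hj
            refine Finset.mem_filter.2 ⟨Finset.mem_univ j, ?_, hj.2⟩
            rintro rfl
            exact hiF hj.1
          exact_mod_cast (Finset.card_le_card hsub).trans (hD i)
        have hS₂F : S₂ ⊆ F := Finset.filter_subset _ _
        have hdetS₂ : DetOn (S₂.biUnion S) (NE A S₂) := by
          intro ω ω' hagree
          constructor
          · intro h j hj hAj
            exact h j hj ((hdet j ω ω'
              (fun v hv => hagree v (Finset.mem_biUnion.2 ⟨j, hj, hv⟩))).2 hAj)
          · intro h j hj hAj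
            exact h j hj ((hdet j ω ω'
              (fun v hv => hagree v (Finset.mem_biUnion.2 ⟨j, hj, hv⟩))).1 hAj)
        have hdisj : Disjoint (S i) (S₂.biUnion S) := by
          rw [Finset.disjoint_biUnion_right]
          intro j hj
          rw [hS₂def, Finset.mem_filter] at hj
          exact hj.2
        have step12 : Pr p (fun ω => A i ω ∧ NE A F ω) ≤ Pr p (A i) * Pr p (NE A S₂) := by
          calc Pr p (fun ω => A i ω ∧ NE A F ω)
              ≤ Pr p (fun ω => A i ω ∧ NE A S₂ ω) :=
                Pr_mono h0 h1 (fun ω h => ⟨h.1, fun j hj => h.2 j (hS₂F hj)⟩)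
            _ = Pr p (A i) * Pr p (NE A S₂) := Pr_indep h0 h1 (hdet i) hdetS₂ hdisj
        have step3 : Pr p (NE A S₂) ≤ Pr p (NE A F)
            + ∑ j ∈ S₁, Pr p (fun ω => A j ω ∧ NE A S₂ ω) := by
          have hsplit := Pr_split (p := p) (NE A S₂) (NE A F)
          have heq1 : Pr p (fun ω => NE A S₂ ω ∧ NE A F ω) = Pr p (NE A F) :=
            Pr_congr (fun ω => ⟨fun h => h.2, fun h => ⟨fun j hj => h j (hS₂F hj), h⟩⟩)
          have hle2 : Pr p (fun ω => NE A S₂ ω ∧ ¬ NE A F ω)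
              ≤ ∑ j ∈ S₁, Pr p (fun ω => A j ω ∧ NE A S₂ ω) := by
            calc Pr p (fun ω => NE A S₂ ω ∧ ¬ NE A F ω)
                ≤ Pr p (fun ω => ∃ j ∈ S₁, A j ω ∧ NE A S₂ ω) := by
                  apply Pr_mono h0 h1
                  rintro ω ⟨hN2, hnF⟩
                  rw [NE] at hnF
                  push_neg at hnF
                  obtain ⟨j, hjF, hAj⟩ := hnF
                  by_cases hd : Disjoint (S i) (S j)
                  · exact absurd hAj (hN2 j (Finset.mem_filter.2 ⟨hjF, hd⟩))
                  · exact ⟨j, Finset.mem_filter.2 ⟨hjF, hd⟩, hAj, hN2⟩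
              _ ≤ _ := Pr_union_le h0 h1 S₁ _
          linarith [hsplit, heq1, hle2]
        have step4 : ∑ j ∈ S₁, Pr p (fun ω => A j ω ∧ NE A S₂ ω)
            ≤ (D : ℝ) * (x * Pr p (NE A S₂)) := by
          have hper : ∀ j ∈ S₁, Pr p (fun ω => A j ω ∧ NE A S₂ ω)
              ≤ x * Pr p (NE A S₂) := by
            intro j hj
            have hjF : j ∈ F := (Finset.filter_subset _ _) hj
            have hS₂sub : S₂ ⊆ F.erase j := by
              intro j' hj'
              rw [hS₂def, Finset.mem_filter] at hj'
              refine Finset.mem_erase.2 ⟨?_, hj'.1⟩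
              rintro rfl
              rw [hS₁def, Finset.mem_filter] at hj
              exact hj.2 hj'.2
            have hcard : S₂.card ≤ n := by
              have h1' := Finset.card_le_card hS₂sub
              have h2' := Finset.card_erase_of_mem hjF
              omega
            exact (IH S₂ hcard).2 j
          calc ∑ j ∈ S₁, Pr p (fun ω => A j ω ∧ NE A S₂ ω)
              ≤ S₁.card • (x * Pr p (NE A S₂)) := Finset.sum_le_card_nsmul _ _ _ hper
            _ = (S₁.card : ℝ) * (x * Pr p (NE A S₂)) := nsmul_eq_mul _ _
            _ ≤ (D : ℝ) * (x * Pr p (NE A S₂)) := by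
                apply mul_le_mul_of_nonneg_right hS₁card
                exact mul_nonneg hx0.le (Pr_nonneg h0 h1 _)
        -- combine
        set PF := Pr p (NE A F) with hPF
        set P2 := Pr p (NE A S₂) with hP2
        set a := Pr p (fun ω => A i ω ∧ NE A F ω) with ha
        have hPFnn : 0 ≤ PF := Pr_nonneg h0 h1 _
        have hP2nn : 0 ≤ P2 := Pr_nonneg h0 h1 _
        have hann : 0 ≤ a := Pr_nonneg h0 h1 _
        have h5 : a ≤ p₀ * P2 :=
          step12.trans (mul_le_mul_of_nonneg_right (hp₀ i) hP2nn)
        have hP2le : P2 ≤ PF + (D : ℝ) * (x * P2) := le_trans step3 (by linarith [step4])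
        have h2P2 : 2 * P2 ≤ ((D : ℝ) + 2) * PF := by
          have hkey : ((D:ℝ)+2) * ((D : ℝ) * (x * P2)) = (D:ℝ) * P2 := by
            have : ((D:ℝ)+2) * ((D : ℝ) * (x * P2)) = (x * ((D:ℝ)+2)) * ((D:ℝ) * P2) := by
              ring
            rw [this, hxe, one_mul]
          nlinarith [mul_le_mul_of_nonneg_left hP2le he.le, hkey]
        rw [show x * PF = PF / ((D:ℝ)+2) by rw [hx]; ring, le_div_iff₀ he]
        nlinarith [mul_le_mul_of_nonneg_right h5 he.le,
          mul_le_mul_of_nonneg_left h2P2 (mul_nonneg hp₀0 he.le),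
          mul_le_mul_of_nonneg_right hcond hPFnn, hann, he, hPFnn,
          mul_nonneg (mul_nonneg hp₀0 he.le) hP2nn]
    -- Part 1
    refine ⟨?_, part2⟩
    rcases Finset.eq_empty_or_nonempty F with rfl | ⟨j, hj⟩
    · rw [Pr_NE_empty]; exact one_pos
    · set F' := F.erase j with hF'def
      have hcard : F'.card ≤ n := by
        have h2' : F'.card = F.card - 1 := hF'def ▸ Finset.card_erase_of_mem hj
        have h3' : 1 ≤ F.card := Finset.card_pos.2 ⟨j, hj⟩
        omega
      obtain ⟨pos', part2'⟩ := IH F' hcard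
      have hsplitF := Pr_split (p := p) (NE A F') (A j)
      have hNEF : Pr p (fun ω => NE A F' ω ∧ ¬ A j ω) = Pr p (NE A F) := by
        apply Pr_congr
        intro ω
        constructor
        · rintro ⟨hN, hnA⟩ j' hj' hAj'
          by_cases hjj : j' = j
          · exact hnA (hjj ▸ hAj')
          · exact hN j' (Finset.mem_erase.2 ⟨hjj, hj'⟩) hAj'
        · intro hN
          exact ⟨fun j' hj' => hN j' (Finset.erase_subset _ _ hj'), hN j hj⟩
      have hflip : Pr p (fun ω => NE A F' ω ∧ A j ω)
          = Pr p (fun ω => A j ω ∧ NE A F' ω) := Pr_congr (fun ω => and_comm)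
      have hb := part2' j
      have : Pr p (NE A F) ≥ (1 - x) * Pr p (NE A F') := by
        rw [← hNEF]
        linarith [hsplitF, hflip, hb]
      nlinarith [pos', hxhalf, this, hx0]

theorem LLL (h0 : 0 ≤ p) (h1 : p ≤ 1) (hdet : ∀ i, DetOn (S i) (A i))
    (D : ℕ) (hD : ∀ i, (univ.filter fun j => j ≠ i ∧ ¬ Disjoint (S i) (S j)).card ≤ D)
    (p₀ : ℝ) (hp₀0 : 0 ≤ p₀) (hp₀ : ∀ i, Pr p (A i) ≤ p₀)
    (hcond : p₀ * ((D : ℝ) + 2)^2 ≤ 1) :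
    ∃ ω : V → Bool, ∀ i, ¬ A i ω := by
  obtain ⟨hpos, -⟩ := LLL_aux A S h0 h1 hdet D hD p₀ hp₀0 hp₀ hcond
    (univ : Finset ι).card univ le_rfl
  obtain ⟨ω, hω⟩ := Pr_exists_of_pos hpos
  exact ⟨ω, fun i => hω i (Finset.mem_univ i)⟩

end LLL
end
end StarLLL
namespace StarLLL
noncomputable section
open Classical Finset Real

lemma fact_lower : ∀ n : ℕ, ((n : ℝ)/3)^n ≤ (n.factorial : ℝ) := by
  intro n
  induction n with
  | zero => simp
  | succ n IH =>
    rcases Nat.eq_zero_or_pos n with rfl | hn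
    · norm_num
    · have hn' : (0:ℝ) < (n:ℝ) := by exact_mod_cast hn
      have hdiv : ((n:ℝ)+1)/(n:ℝ) ≤ Real.exp (1/(n:ℝ)) := by
        have h := Real.add_one_le_exp (1/(n:ℝ))
        have heq : ((n:ℝ)+1)/(n:ℝ) = 1/(n:ℝ) + 1 := by field_simp; ring
        rw [heq]; exact h
      have hpow : (((n:ℝ)+1)/(n:ℝ))^n ≤ Real.exp 1 := by
        calc (((n:ℝ)+1)/(n:ℝ))^n ≤ (Real.exp (1/(n:ℝ)))^n := by
              apply pow_le_pow_left₀ (by positivity) hdiv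
          _ = Real.exp ((n:ℕ) * (1/(n:ℝ))) := (Real.exp_nat_mul _ n).symm
          _ = Real.exp 1 := by rw [mul_one_div, div_self hn'.ne']
      have hexp3 : Real.exp 1 ≤ 3 := Real.exp_one_lt_d9.le.trans (by norm_num)
      have key : ((n:ℝ)+1)^n ≤ 3 * (n:ℝ)^n := by
        have heq2 : ((n:ℝ)+1)^n = (((n:ℝ)+1)/(n:ℝ))^n * (n:ℝ)^n := by
          rw [div_pow, div_mul_cancel₀]
          positivity
        rw [heq2]
        exact mul_le_mul_of_nonneg_right (hpow.trans hexp3) (by positivity)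
      calc (((n+1:ℕ):ℝ)/3)^(n+1) = (((n:ℝ)+1)^n/3^n) * (((n:ℝ)+1)/3) := by
            push_cast; rw [div_pow]; ring
        _ ≤ (3*(n:ℝ)^n/3^n) * (((n:ℝ)+1)/3) := by
            apply mul_le_mul_of_nonneg_right _ (by positivity)
            gcongr
        _ = ((n:ℝ)/3)^n * ((n:ℝ)+1) := by rw [div_pow]; ring
        _ ≤ (n.factorial:ℝ) * ((n:ℝ)+1) := mul_le_mul_of_nonneg_right IH (by positivity)
        _ = ((n+1).factorial : ℝ) := by rw [Nat.factorial_succ]; push_cast; ring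

lemma log_le_two_sqrt {y : ℝ} (hy : 1 ≤ y) : Real.log y ≤ 2 * Real.sqrt y := by
  have h1 : Real.log y = 2 * Real.log (Real.sqrt y) := by
    rw [Real.log_sqrt (by linarith)]; ring
  have h2 : Real.log (Real.sqrt y) ≤ Real.sqrt y - 1 :=
    Real.log_le_sub_one_of_pos (Real.sqrt_pos.2 (by linarith))
  nlinarith [Real.sqrt_nonneg y]

lemma log_two_ge_half : (1/2 : ℝ) ≤ Real.log 2 := by
  have h : Real.log (1/2) ≤ 1/2 - 1 := Real.log_le_sub_one_of_pos (by norm_num)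
  rw [one_div, Real.log_inv] at h
  linarith

end
end StarLLL
namespace StarLLL
noncomputable section
open Classical Finset Real

lemma exp5L {d : ℕ} {L : ℝ} (hD0 : (0:ℝ) < d) (hL : L = Real.log d) :
    Real.exp (-(5*L)) = 1/(d:ℝ)^5 := by
  rw [Real.exp_neg, show (5:ℝ)*L = ((5:ℕ):ℝ)*L by norm_num, Real.exp_nat_mul,
    hL, Real.exp_log hD0, one_div]

lemma numA {d : ℕ} {L p : ℝ} (hD0 : (0:ℝ) < d) (hL : L = Real.log d)
    (hp : p = 5*L/(d:ℝ)) (hp1 : p ≤ 1) :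
    (1-p)^d ≤ 1/(d:ℝ)^5 := by
  have h1 : 1 - p ≤ Real.exp (-p) := by linarith [Real.add_one_le_exp (-p)]
  have h2 : (1-p)^d ≤ (Real.exp (-p))^d := pow_le_pow_left₀ (by linarith) h1 d
  have h3 : (Real.exp (-p))^d = Real.exp ((d:ℕ) * (-p)) := (Real.exp_nat_mul _ d).symm
  have h4 : ((d:ℕ):ℝ) * (-p) = -(5*L) := by
    rw [hp]
    field_simp
  rw [h3, h4, exp5L hD0 hL] at h2
  exact h2

lemma numB {d t : ℕ} {L p : ℝ} (hD0 : (0:ℝ) < d) (hL : L = Real.log d) (hL0 : 0 < L)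
    (hp : p = 5*L/(d:ℝ)) (hp0 : 0 ≤ p) (ht_ge : 40*L ≤ (t:ℝ)) :
    (d.choose (t+1) : ℝ) * p^(t+1) ≤ 1/(d:ℝ)^5 := by
  have hfac0 : (0:ℝ) < (((t+1:ℕ):ℝ)/3)^(t+1) := by positivity
  have h1 : (d.choose (t+1):ℝ) ≤ ((d:ℝ))^(t+1) / ((t+1).factorial : ℝ) :=
    Nat.choose_le_pow_div _ _
  have h2 : (d.choose (t+1) : ℝ) * p^(t+1) ≤ ((d:ℝ)*p)^(t+1) / ((t+1).factorial : ℝ) := by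
    calc (d.choose (t+1) : ℝ) * p^(t+1)
        ≤ ((d:ℝ)^(t+1) / ((t+1).factorial : ℝ)) * p^(t+1) :=
          mul_le_mul_of_nonneg_right h1 (by positivity)
      _ = ((d:ℝ)*p)^(t+1) / ((t+1).factorial : ℝ) := by
          rw [mul_pow]
          try ring
  have h3 : ((d:ℝ)*p)^(t+1) / ((t+1).factorial : ℝ)
      ≤ ((d:ℝ)*p)^(t+1) / (((t+1:ℕ):ℝ)/3)^(t+1) := by
    have hnum : (0:ℝ) ≤ ((d:ℝ)*p)^(t+1) := by positivity
    exact div_le_div_of_nonneg_left hnum hfac0 (fact_lower (t+1))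
  have hdp : (d:ℝ) * p = 5*L := by
    rw [hp, mul_div_assoc']
    exact mul_div_cancel_left₀ _ hD0.ne'
  have h4 : ((d:ℝ)*p)^(t+1) / (((t+1:ℕ):ℝ)/3)^(t+1)
      = ((5*L) / (((t+1:ℕ):ℝ)/3))^(t+1) := by rw [hdp, ← div_pow]
  have h6 : (5*L) / (((t+1:ℕ):ℝ)/3) ≤ 1/2 := by
    rw [div_le_iff₀ (by positivity : (0:ℝ) < ((t+1:ℕ):ℝ)/3)]
    push_cast
    linarith
  have h7 : ((5*L) / (((t+1:ℕ):ℝ)/3))^(t+1) ≤ (1/2:ℝ)^(t+1) :=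
    pow_le_pow_left₀ (by positivity) h6 _
  have h8 : (1/2:ℝ)^(t+1) ≤ 1/(d:ℝ)^5 := by
    have he : (1/2:ℝ) = Real.exp (-(Real.log 2)) := by
      rw [Real.exp_neg, Real.exp_log (by norm_num : (0:ℝ) < 2), one_div]
    rw [he, ← Real.exp_nat_mul, ← exp5L hD0 hL]
    apply Real.exp_le_exp.2
    have hlog2 := log_two_ge_half
    have htL : 40*L ≤ ((t+1:ℕ):ℝ) := by push_cast; linarith
    have hmul : 40*L*(1/2) ≤ ((t+1:ℕ):ℝ) * Real.log 2 :=
      mul_le_mul htL hlog2 (by norm_num) (by positivity)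
    nlinarith [hmul, hL0]
  calc (d.choose (t+1) : ℝ) * p^(t+1) ≤ ((d:ℝ)*p)^(t+1) / ((t+1).factorial : ℝ) := h2
    _ ≤ ((d:ℝ)*p)^(t+1) / (((t+1:ℕ):ℝ)/3)^(t+1) := h3
    _ = ((5*L) / (((t+1:ℕ):ℝ)/3))^(t+1) := h4
    _ ≤ (1/2:ℝ)^(t+1) := h7
    _ ≤ 1/(d:ℝ)^5 := h8

lemma numC {d : ℕ} (hd7 : (10^7:ℝ) ≤ (d:ℝ)) :
    (1/(d:ℝ)^5) * (((2*d^2:ℕ):ℝ) + 2)^2 ≤ 1 := by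
  have hD0 : (0:ℝ) < (d:ℝ) := by linarith
  have hD5 : (0:ℝ) < (d:ℝ)^5 := by positivity
  have hcast : ((2*d^2:ℕ):ℝ) = 2*(d:ℝ)^2 := by push_cast; ring
  rw [hcast, one_div_mul_eq_div, div_le_one hD5]
  have h10 : (10:ℝ) ≤ (d:ℝ) := by linarith
  have hA4 : 0 ≤ (d:ℝ)^4*((d:ℝ)-10) := mul_nonneg (by positivity) (by linarith)
  have hA2 : 0 ≤ (d:ℝ)^2*((d:ℝ)^2-100) := mul_nonneg (by positivity) (by nlinarith)
  nlinarith [hA4, hA2, sq_nonneg (d:ℝ)]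

end
end StarLLL

open Finset in
/-- There is an absolute constant `c > 0` such that for all sufficiently large `d`,
every finite simple `d`-regular graph contains a star factor in which every star
has at least `c * d / log d` edges.  A star factor is encoded by the set `C` of
centers and an assignment `f` of each leaf to an adjacent center; the number of
edges of the star centered at `c'` is the number of leaves assigned to `c'`. -/
theorem star_factor_regular : ∃ c : ℝ, 0 < c ∧ ∃ d₀ : ℕ, ∀ d : ℕ, d₀ ≤ d →
    ∀ (V : Type) [Fintype V] [DecidableEq V] (G : SimpleGraph V) [DecidableRel G.Adj],
      G.IsRegularOfDegree d →
      ∃ (C : Finset V) (f : V → V),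
        (∀ v : V, v ∉ C → f v ∈ C ∧ G.Adj v (f v)) ∧
        (∀ c' ∈ C,
          c * d / Real.log d ≤ ((Finset.univ.filter (fun v => v ∉ C ∧ f v = c')).card : ℝ)) := by
  classical
  refine ⟨1/200, by norm_num, 10^7, ?_⟩
  intro d hd V _ _ G _ hreg
  -- basic numeric facts
  have hd7 : (10^7 : ℝ) ≤ (d:ℝ) := by exact_mod_cast hd
  have hD0 : (0:ℝ) < (d:ℝ) := by linarith
  set L : ℝ := Real.log (d:ℝ) with hL
  have hL1 : (1:ℝ) ≤ L := by
    rw [hL, Real.le_log_iff_exp_le hD0]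
    have := Real.exp_one_lt_d9
    linarith
  have hL0 : (0:ℝ) < L := by linarith
  have hsq : (3162:ℝ) ≤ Real.sqrt (d:ℝ) := by
    rw [Real.le_sqrt (by norm_num) hD0.le]
    norm_num
    linarith
  have hsqD : Real.sqrt (d:ℝ) * Real.sqrt (d:ℝ) = (d:ℝ) := Real.mul_self_sqrt hD0.le
  have hLsqrt : L ≤ 2 * Real.sqrt (d:ℝ) := StarLLL.log_le_two_sqrt (by linarith)
  -- parameters
  set p : ℝ := 5 * L / (d:ℝ) with hp
  have hp0 : 0 ≤ p := by rw [hp]; positivity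
  have hp1 : p ≤ 1 := by
    rw [hp, div_le_one hD0]
    nlinarith [hLsqrt, hsq, hsqD, Real.sqrt_nonneg (d:ℝ)]
  set t : ℕ := ⌈(40:ℝ) * L⌉₊ with ht
  have ht_ge : (40:ℝ) * L ≤ (t:ℝ) := Nat.le_ceil _
  have ht_le : (t:ℝ) ≤ 41 * L := by
    have h := Nat.ceil_lt_add_one (show (0:ℝ) ≤ 40*L by positivity)
    rw [← ht] at h
    linarith
  have ht_pos : 0 < t := by
    have h40 : (0:ℝ) < (t:ℝ) := by linarith
    exact_mod_cast h40
  set k : ℕ := ⌈(d:ℝ) / (200 * L)⌉₊ with hk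
  have hk_ge : (d:ℝ) / (200*L) ≤ (k:ℝ) := Nat.le_ceil _
  have hk_le : (k:ℝ) ≤ (d:ℝ)/(200*L) + 1 := by
    have h := Nat.ceil_lt_add_one (show (0:ℝ) ≤ (d:ℝ)/(200*L) by positivity)
    rw [← hk] at h
    linarith
  have htk : k * t + t ≤ d := by
    have hall_num : (t:ℝ) * ((k:ℝ) + 1) ≤ (d:ℝ) := by
      have h1 : (t:ℝ)*((k:ℝ)+1) ≤ (41*L) * ((d:ℝ)/(200*L) + 2) := by
        apply mul_le_mul ht_le (by linarith) (by positivity) (by positivity)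
      have h2 : (41*L)*((d:ℝ)/(200*L)+2) = 41*(d:ℝ)/200 + 82*L := by
        field_simp
        ring
      nlinarith [h1, h2, hLsqrt, hsq, hsqD, Real.sqrt_nonneg (d:ℝ),
        mul_nonneg (sub_nonneg.2 hsq) (Real.sqrt_nonneg (d:ℝ))]
    have h : ((k*t + t : ℕ) : ℝ) ≤ (d:ℝ) := by push_cast; nlinarith [hall_num]
    exact_mod_cast h
  -- probability bounds
  have hexpA : (1 - p)^d ≤ 1/(d:ℝ)^5 := StarLLL.numA hD0 hL hp hp1
  have hexpB : (d.choose (t+1) : ℝ) * p^(t+1) ≤ 1/(d:ℝ)^5 :=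
    StarLLL.numB hD0 hL hL0 hp hp0 ht_ge
  have hcond : (1/(d:ℝ)^5) * (((2*d^2:ℕ):ℝ) + 2)^2 ≤ 1 := StarLLL.numC hd7
  -- set up the events for the local lemma
  set Sv : V ⊕ V → Finset V :=
    (fun i => Sum.elim (fun v => G.neighborFinset v) (fun v => G.neighborFinset v) i) with hSv
  set Av : V ⊕ V → (V → Bool) → Prop :=
    (fun i => Sum.elim
      (fun v ω => ∀ u ∈ G.neighborFinset v, ω u = false)
      (fun v ω => t + 1 ≤ ((G.neighborFinset v).filter (fun u => ω u = true)).card) i) with hAv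
  have hdet : ∀ i, StarLLL.DetOn (Sv i) (Av i) := by
    rintro (v | v) ω ω' hagree
    · constructor
      · intro h u hu
        rw [← hagree u hu]
        exact h u hu
      · intro h u hu
        rw [hagree u hu]
        exact h u hu
    · have heq : (G.neighborFinset v).filter (fun u => ω u = true)
          = (G.neighborFinset v).filter (fun u => ω' u = true) := by
        apply Finset.filter_congr
        intro u hu
        rw [hagree u hu]
      show (t + 1 ≤ _) ↔ (t + 1 ≤ _)
      rw [heq]
  -- dependency bound
  have hDbound : ∀ i, ((univ : Finset (V ⊕ V)).filter
      (fun j => j ≠ i ∧ ¬ Disjoint (Sv i) (Sv j))).card ≤ 2*d^2 := by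
    have hkey : ∀ v : V, ∀ i : V ⊕ V, ((univ : Finset (V ⊕ V)).filter
        (fun j => j ≠ i ∧ ¬ Disjoint (G.neighborFinset v) (Sv j))).card ≤ 2*d^2 := by
      intro v i
      set B : Finset V := (G.neighborFinset v).biUnion (fun w => G.neighborFinset w) with hB
      have hBcard : B.card ≤ d * d := by
        refine (Finset.card_biUnion_le).trans ?_
        have hper : ∀ w ∈ G.neighborFinset v, (G.neighborFinset w).card = d := by
          intro w _
          rw [SimpleGraph.card_neighborFinset_eq_degree]
          exact hreg w
        rw [Finset.sum_congr rfl hper, Finset.sum_const, smul_eq_mul,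
          SimpleGraph.card_neighborFinset_eq_degree, hreg v]
      have hsub : ((univ : Finset (V ⊕ V))).filter
          (fun j => j ≠ i ∧ ¬ Disjoint (G.neighborFinset v) (Sv j))
          ⊆ B.image Sum.inl ∪ B.image Sum.inr := by
        intro j hj
        obtain ⟨-, -, hnd⟩ := Finset.mem_filter.1 hj
        obtain ⟨w, hw1, hw2⟩ := Finset.not_disjoint_iff.1 hnd
        obtain (u | u) := j
        · apply Finset.mem_union_left
          apply Finset.mem_image_of_mem
          have hwu : w ∈ G.neighborFinset u := hw2
          rw [SimpleGraph.mem_neighborFinset] at hwu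
          refine Finset.mem_biUnion.2 ⟨w, hw1, ?_⟩
          rw [SimpleGraph.mem_neighborFinset]
          exact hwu.symm
        · apply Finset.mem_union_right
          apply Finset.mem_image_of_mem
          have hwu : w ∈ G.neighborFinset u := hw2
          rw [SimpleGraph.mem_neighborFinset] at hwu
          refine Finset.mem_biUnion.2 ⟨w, hw1, ?_⟩
          rw [SimpleGraph.mem_neighborFinset]
          exact hwu.symm
      calc (((univ : Finset (V ⊕ V))).filter
            (fun j => j ≠ i ∧ ¬ Disjoint (G.neighborFinset v) (Sv j))).card
          ≤ (B.image Sum.inl ∪ B.image Sum.inr).card := Finset.card_le_card hsub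
        _ ≤ (B.image Sum.inl).card + (B.image Sum.inr).card := Finset.card_union_le _ _
        _ ≤ B.card + B.card := Nat.add_le_add Finset.card_image_le Finset.card_image_le
        _ ≤ d * d + d * d := Nat.add_le_add hBcard hBcard
        _ = 2*d^2 := by ring
    rintro (v | v)
    · exact hkey v (Sum.inl v)
    · exact hkey v (Sum.inr v)
  -- event probability bounds
  have hAbound : ∀ i, StarLLL.Pr p (Av i) ≤ 1/(d:ℝ)^5 := by
    rintro (v | v)
    · have hPr : StarLLL.Pr p (Av (Sum.inl v)) = (1-p)^d := by
        have h := StarLLL.Pr_cyl (p := p) (G.neighborFinset v) false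
        rw [if_neg Bool.false_ne_true] at h
        rw [show Av (Sum.inl v) = fun ω => ∀ u ∈ G.neighborFinset v, ω u = false from rfl,
          h, SimpleGraph.card_neighborFinset_eq_degree, hreg v]
      rw [hPr]
      exact hexpA
    · calc StarLLL.Pr p (Av (Sum.inr v))
          ≤ StarLLL.Pr p (fun ω => ∃ T ∈ (G.neighborFinset v).powersetCard (t+1),
              ∀ u ∈ T, ω u = true) := by
            apply StarLLL.Pr_mono hp0 hp1
            intro ω hω
            have hcard : t + 1 ≤ ((G.neighborFinset v).filter (fun u => ω u = true)).card := hω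
            obtain ⟨T, hTsub, hTcard⟩ := Finset.exists_subset_card_eq hcard
            refine ⟨T, Finset.mem_powersetCard.2
              ⟨hTsub.trans (Finset.filter_subset _ _), hTcard⟩, fun u hu => ?_⟩
            exact (Finset.mem_filter.1 (hTsub hu)).2
        _ ≤ ∑ T ∈ (G.neighborFinset v).powersetCard (t+1),
              StarLLL.Pr p (fun ω => ∀ u ∈ T, ω u = true) := StarLLL.Pr_union_le hp0 hp1 _ _
        _ = ∑ T ∈ (G.neighborFinset v).powersetCard (t+1), p^(t+1) := by
            apply Finset.sum_congr rfl
            intro T hT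
            have h := StarLLL.Pr_cyl (p := p) T true
            rw [if_pos rfl] at h
            rw [h, (Finset.mem_powersetCard.1 hT).2]
        _ = (d.choose (t+1) : ℝ) * p^(t+1) := by
            rw [Finset.sum_const, Finset.card_powersetCard,
              SimpleGraph.card_neighborFinset_eq_degree, hreg v, nsmul_eq_mul]
        _ ≤ 1/(d:ℝ)^5 := hexpB
  -- apply the local lemma
  obtain ⟨ω, hω⟩ := StarLLL.LLL Av Sv hp0 hp1 hdet (2*d^2)
    (fun i => by convert hDbound i using 3) (1/(d:ℝ)^5)
    (by positivity) hAbound hcond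
  -- the set of centers
  set C : Finset V := univ.filter (fun v => ω v = true) with hC
  have hmemC : ∀ v : V, v ∈ C ↔ ω v = true := by
    intro v
    rw [hC, Finset.mem_filter]
    simp
  have propA : ∀ v : V, ∃ u, G.Adj v u ∧ u ∈ C := by
    intro v
    have h : ¬ ∀ u ∈ G.neighborFinset v, ω u = false := hω (Sum.inl v)
    push_neg at h
    obtain ⟨u, hu, hne⟩ := h
    rw [SimpleGraph.mem_neighborFinset] at hu
    refine ⟨u, hu, (hmemC u).2 ?_⟩
    simpa using hne
  have propB : ∀ v : V, ((G.neighborFinset v).filter (fun u => u ∈ C)).card ≤ t := by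
    intro v
    have h : ¬ (t + 1 ≤ ((G.neighborFinset v).filter (fun u => ω u = true)).card) :=
      hω (Sum.inr v)
    push_neg at h
    have heq : (G.neighborFinset v).filter (fun u => u ∈ C)
        = (G.neighborFinset v).filter (fun u => ω u = true) := by
      apply Finset.filter_congr
      intro u _
      simp [hmemC u]
    rw [heq]
    omega
  -- each center has many non-center neighbours
  have hleaves : ∀ c' ∈ C, d - t ≤ ((G.neighborFinset c') \ C).card := by
    intro c' _
    have hsplit : ((G.neighborFinset c').filter (fun u => u ∈ C)).card
        + ((G.neighborFinset c').filter (fun u => u ∉ C)).card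
        = (G.neighborFinset c').card := Finset.card_filter_add_card_filter_not _
    have hdeg : (G.neighborFinset c').card = d := by
      rw [SimpleGraph.card_neighborFinset_eq_degree]; exact hreg c'
    have hsd : (G.neighborFinset c') \ C = (G.neighborFinset c').filter (fun u => u ∉ C) :=
      Finset.sdiff_eq_filter _ _
    rw [hsd]
    have := propB c'
    omega
  -- Hall's theorem: match each center with k distinct leaves
  set T : ({x // x ∈ C} × Fin k) → Finset V := (fun z => (G.neighborFinset (z.1 : V)) \ C)
    with hT
  have hallcond : ∀ s : Finset ({x // x ∈ C} × Fin k), s.card ≤ (s.biUnion T).card := by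
    intro s
    set Sc : Finset {x // x ∈ C} := s.image Prod.fst with hSc
    have h1 : s.card ≤ Sc.card * k := by
      calc s.card ≤ (Sc ×ˢ (univ : Finset (Fin k))).card := by
            apply Finset.card_le_card
            intro z hz
            rw [Finset.mem_product]
            exact ⟨Finset.mem_image_of_mem _ hz, Finset.mem_univ _⟩
        _ = Sc.card * k := by rw [Finset.card_product, Finset.card_univ, Fintype.card_fin]
    have hLTsub : ∀ a ∈ Sc, (G.neighborFinset (a : V)) \ C ⊆ s.biUnion T := by
      intro a ha
      obtain ⟨z, hz, hza⟩ := Finset.mem_image.1 ha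
      intro u hu
      exact Finset.mem_biUnion.2 ⟨z, hz, by rw [hT]; dsimp only; rw [hza]; exact hu⟩
    set LT : Finset V := s.biUnion T with hLT
    have hdouble : Sc.card * (d - t) ≤ LT.card * t := by
      calc Sc.card * (d - t) = ∑ _a ∈ Sc, (d - t) := by
            rw [Finset.sum_const, smul_eq_mul]
        _ ≤ ∑ a ∈ Sc, ((G.neighborFinset (a : V)) \ C).card :=
            Finset.sum_le_sum (fun a _ => hleaves (a : V) a.2)
        _ = ∑ a ∈ Sc, (LT.filter (fun u => u ∈ (G.neighborFinset (a : V)) \ C)).card := by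
            apply Finset.sum_congr rfl
            intro a ha
            congr 1
            rw [Finset.filter_mem_eq_inter, Finset.inter_eq_right.2 (hLTsub a ha)]
        _ = ∑ a ∈ Sc, ∑ u ∈ LT,
              (if u ∈ (G.neighborFinset (a : V)) \ C then 1 else 0) := by
            apply Finset.sum_congr rfl
            intro a _
            rw [Finset.card_filter]
        _ = ∑ u ∈ LT, ∑ a ∈ Sc,
              (if u ∈ (G.neighborFinset (a : V)) \ C then 1 else 0) := by
            rw [Finset.sum_comm]
        _ = ∑ u ∈ LT, (Sc.filter (fun (a : {x // x ∈ C}) => u ∈ (G.neighborFinset (a : V)) \ C)).card := by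
            apply Finset.sum_congr rfl
            intro u _
            rw [Finset.card_filter]
        _ ≤ ∑ _u ∈ LT, t := by
            apply Finset.sum_le_sum
            intro u _
            calc (Sc.filter (fun (a : {x // x ∈ C}) => u ∈ (G.neighborFinset (a : V)) \ C)).card
                ≤ ((G.neighborFinset u).filter (fun w => w ∈ C)).card := by
                  apply Finset.card_le_card_of_injOn (fun (a : {x // x ∈ C}) => (a : V))
                  · intro a ha
                    obtain ⟨-, hu⟩ := Finset.mem_filter.1 ha
                    obtain ⟨hun, -⟩ := Finset.mem_sdiff.1 hu
                    rw [SimpleGraph.mem_neighborFinset] at hun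
                    refine Finset.mem_filter.2 ⟨?_, a.2⟩
                    rw [SimpleGraph.mem_neighborFinset]
                    exact hun.symm
                  · intro a _ b _ hab
                    exact Subtype.ext hab
              _ ≤ t := propB u
        _ = LT.card * t := by rw [Finset.sum_const, smul_eq_mul]
    have hkt : k * t ≤ d - t := by omega
    calc s.card ≤ Sc.card * k := h1
      _ ≤ LT.card := by
          have hstep : (Sc.card * k) * t ≤ LT.card * t := by
            calc (Sc.card * k) * t = Sc.card * (k * t) := by ring
              _ ≤ Sc.card * (d - t) := Nat.mul_le_mul_left _ hkt
              _ ≤ LT.card * t := hdouble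
          exact Nat.le_of_mul_le_mul_right hstep ht_pos
  obtain ⟨g, hginj, hgmem⟩ :=
    (Finset.all_card_le_biUnion_card_iff_exists_injective T).1 hallcond
  -- define the assignment
  set f : V → V := (fun v =>
    if h : ∃ z : {x // x ∈ C} × Fin k, g z = v then ((h.choose.1 : {x // x ∈ C}) : V)
    else (propA v).choose) with hf
  have hf_img : ∀ z : {x // x ∈ C} × Fin k, f (g z) = ((z.1 : {x // x ∈ C}) : V) := by
    intro z
    have hex : ∃ z' : {x // x ∈ C} × Fin k, g z' = g z := ⟨z, rfl⟩
    rw [hf]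
    dsimp only
    rw [dif_pos hex]
    have : hex.choose = z := hginj hex.choose_spec
    rw [this]
  refine ⟨C, f, ?_, ?_⟩
  · intro v hv
    by_cases hvg : ∃ z : {x // x ∈ C} × Fin k, g z = v
    · obtain ⟨z, hz⟩ := hvg
      rw [← hz, hf_img z]
      have hmem := hgmem z
      rw [hT] at hmem
      dsimp only at hmem
      obtain ⟨hn, -⟩ := Finset.mem_sdiff.1 hmem
      rw [SimpleGraph.mem_neighborFinset] at hn
      exact ⟨(z.1 : {x // x ∈ C}).2, hn.symm⟩
    · rw [hf]
      dsimp only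
      rw [dif_neg hvg]
      exact ⟨(propA v).choose_spec.2, (propA v).choose_spec.1⟩
  · intro c' hc'
    have hkcard : k ≤ (univ.filter (fun v => v ∉ C ∧ f v = c')).card := by
      have hinj : ∀ i : Fin k, g (⟨c', hc'⟩, i) ∈ univ.filter (fun v => v ∉ C ∧ f v = c') := by
        intro i
        have hmem := hgmem (⟨c', hc'⟩, i)
        rw [hT] at hmem
        dsimp only at hmem
        obtain ⟨-, hnc⟩ := Finset.mem_sdiff.1 hmem
        refine Finset.mem_filter.2 ⟨Finset.mem_univ _, hnc, ?_⟩
        exact hf_img (⟨c', hc'⟩, i)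
      calc k = (univ : Finset (Fin k)).card := by rw [Finset.card_univ, Fintype.card_fin]
        _ ≤ (univ.filter (fun v => v ∉ C ∧ f v = c')).card := by
            apply Finset.card_le_card_of_injOn (fun i => g (⟨c', hc'⟩, i))
            · intro i _
              exact hinj i
            · intro i _ j _ hij
              have := hginj hij
              exact (Prod.ext_iff.1 this).2
    calc (1/200 : ℝ) * d / Real.log d = (d:ℝ) / (200 * L) := by
          rw [hL]; ring
      _ ≤ (k : ℝ) := hk_ge
      _ ≤ ((univ.filter (fun v => v ∉ C ∧ f v = c')).card : ℝ) := by exact_mod_cast hkcard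
end

section
/- Let G be a d-regular graph with d ≥ 2, let p = (2 + 2·log d)/d, and choose a random set C by including each vertex independently with probability p. Then for each vertex v, the probability that v has no neighbor in C or more than 3pd neighbors in C is less than 1/(e·d²), for all sufficiently large d. -/
open Real Finset

lemma sum_bound {V : Type} [DecidableEq V] (N : Finset V) (d : ℕ) (hN : N.card = d)
    (p q m : ℝ) (hp : 0 ≤ p) (hq : 0 ≤ q) :
    ∑ A ∈ N.powerset.filter (fun A => m < (A.card : ℝ)), p ^ A.card * q ^ (d - A.card)
      ≤ (3:ℝ) ^ (-m) * (3 * p + q) ^ d := by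
  have key : ∀ A ∈ N.powerset.filter (fun A => m < (A.card : ℝ)),
      p ^ A.card * q ^ (d - A.card)
        ≤ (3:ℝ) ^ (-m) * ((3*p) ^ A.card * q ^ (d - A.card)) := by
    intro A hA
    rw [Finset.mem_filter] at hA
    have hk : m < (A.card : ℝ) := hA.2
    have h3 : (3:ℝ) ^ (-(A.card:ℝ)) * (3:ℝ) ^ ((A.card:ℝ)) = 1 := by
      rw [← Real.rpow_add (by norm_num)]; simp
    have h1 : (3:ℝ) ^ (-(A.card:ℝ)) * ((3*p) ^ A.card * q ^ (d - A.card))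
        = p ^ A.card * q ^ (d - A.card) := by
      rw [mul_pow, ← Real.rpow_natCast (3:ℝ) A.card, ← mul_assoc, ← mul_assoc, h3, one_mul]
    rw [← h1]
    have h2 : (3:ℝ) ^ (-(A.card:ℝ)) ≤ (3:ℝ) ^ (-m) :=
      Real.rpow_le_rpow_of_exponent_le (by norm_num) (by linarith)
    exact mul_le_mul_of_nonneg_right h2 (by positivity)
  calc ∑ A ∈ N.powerset.filter (fun A => m < (A.card : ℝ)), p ^ A.card * q ^ (d - A.card)
      ≤ ∑ A ∈ N.powerset.filter (fun A => m < (A.card : ℝ)),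
          (3:ℝ) ^ (-m) * ((3*p) ^ A.card * q ^ (d - A.card)) := Finset.sum_le_sum key
    _ ≤ ∑ A ∈ N.powerset, (3:ℝ) ^ (-m) * ((3*p) ^ A.card * q ^ (d - A.card)) := by
        apply Finset.sum_le_sum_of_subset_of_nonneg (Finset.filter_subset _ _)
        intro A _ _; positivity
    _ = (3:ℝ) ^ (-m) * ∑ A ∈ N.powerset, (3*p) ^ A.card * q ^ (d - A.card) := by
        rw [Finset.mul_sum]
    _ = (3:ℝ) ^ (-m) * (3 * p + q) ^ d := by
        congr 1
        calc ∑ A ∈ N.powerset, (3*p) ^ A.card * q ^ (d - A.card)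
            = ∑ A ∈ N.powerset, (∏ _i ∈ A, (3*p)) * ∏ _i ∈ N \ A, q := by
              apply Finset.sum_congr rfl; intro A hA
              rw [Finset.prod_const, Finset.prod_const,
                Finset.card_sdiff_of_subset (Finset.mem_powerset.mp hA), hN]
          _ = ∏ _i ∈ N, (3*p + q) := (Finset.prod_add _ _ N).symm
          _ = (3*p+q)^d := by rw [Finset.prod_const, hN]
open Real

lemma real_final (d : ℕ) (hd : 1 ≤ d) (hp1 : (2 + 2*Real.log d)/d ≤ 1) :
    (1 - (2 + 2*Real.log d)/d)^d
      + (3:ℝ)^(-(3*(2+2*Real.log d))) * (3*((2+2*Real.log d)/d) + (1-(2+2*Real.log d)/d))^d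
      < 1 / (Real.exp 1 * (d:ℝ)^2) := by
  have hd0 : (0:ℝ) < d := by exact_mod_cast hd
  set s : ℝ := 2 + 2*Real.log d with hs_def
  set p : ℝ := s / d with hp_def
  have hlog : 0 ≤ Real.log d := Real.log_natCast_nonneg d
  have hs2 : 2 ≤ s := by simp [hs_def]; linarith
  have hp0 : 0 ≤ p := by positivity
  have hpd : p * d = s := div_mul_cancel₀ s (ne_of_gt hd0)
  -- first term
  have hA : (1 - p)^d ≤ Real.exp (-s) := by
    have h1 : 1 - p ≤ Real.exp (-p) := by
      have := Real.add_one_le_exp (-p); linarith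
    calc (1-p)^d ≤ Real.exp (-p) ^ d := pow_le_pow_left₀ (by linarith) h1 d
      _ = Real.exp ((d:ℝ) * (-p)) := (Real.exp_nat_mul _ d).symm
      _ = Real.exp (-s) := by rw [show (d:ℝ) * (-p) = -(p * d) by ring, hpd]
  -- second term
  have hB : (3:ℝ)^(-(3*s)) * (3*p + (1-p))^d < Real.exp (-s) := by
    have h1 : 3*p + (1-p) = 1 + 2*p := by ring
    have h2 : (1 + 2*p)^d ≤ Real.exp ((d:ℝ) * (2*p)) := by
      rw [Real.exp_nat_mul]
      exact pow_le_pow_left₀ (by linarith) (by have := Real.add_one_le_exp (2*p); linarith) d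
    have h3 : (3:ℝ)^(-(3*s)) = Real.exp (Real.log 3 * (-(3*s))) :=
      Real.rpow_def_of_pos (by norm_num) _
    have hlog3 : 1 < Real.log 3 := by
      rw [Real.lt_log_iff_exp_lt (by norm_num)]
      calc Real.exp 1 < 2.7182818286 := Real.exp_one_lt_d9
        _ < 3 := by norm_num
    have h4 : Real.log 3 * (-(3*s)) + (d:ℝ) * (2*p) < -s := by
      have : (d:ℝ) * (2*p) = 2*s := by rw [show (d:ℝ)*(2*p) = 2*(p*d) by ring, hpd]
      rw [this]
      nlinarith
    calc (3:ℝ)^(-(3*s)) * (3*p + (1-p))^d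
        ≤ Real.exp (Real.log 3 * (-(3*s))) * Real.exp ((d:ℝ) * (2*p)) := by
          rw [h3, h1]
          exact mul_le_mul_of_nonneg_left h2 (le_of_lt (Real.exp_pos _))
      _ = Real.exp (Real.log 3 * (-(3*s)) + (d:ℝ) * (2*p)) := (Real.exp_add _ _).symm
      _ < Real.exp (-s) := Real.exp_lt_exp.mpr h4
  -- value of exp(-s)
  have hE : Real.exp (-s) = Real.exp (-2) / (d:ℝ)^2 := by
    have h2 : Real.exp (2 * Real.log d) = (d:ℝ)^2 := by
      rw [two_mul, Real.exp_add, Real.exp_log hd0]; ring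
    rw [show -s = -2 + -(2*Real.log d) by simp [hs_def]; ring, Real.exp_add, Real.exp_neg (2*Real.log d), h2]
    ring
  have hfin : 2 * Real.exp (-2) < Real.exp (-1) := by
    have hsq : Real.exp 2 = Real.exp 1 ^ 2 := by
      rw [show (2:ℝ) = (2:ℕ) * 1 by norm_num, Real.exp_nat_mul]
    rw [Real.exp_neg, Real.exp_neg, hsq]
    have he := Real.exp_one_gt_d9
    have hep := Real.exp_pos 1
    rw [inv_eq_one_div, inv_eq_one_div]
    rw [show 2 * (1 / Real.exp 1 ^ 2) = 2 / Real.exp 1 ^ 2 by ring]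
    rw [div_lt_div_iff₀ (by positivity) (by positivity)]
    nlinarith
  have hgoal : 1 / (Real.exp 1 * (d:ℝ)^2) = Real.exp (-1) / (d:ℝ)^2 := by
    rw [Real.exp_neg]; field_simp
  rw [hgoal]
  calc (1-p)^d + (3:ℝ)^(-(3*s)) * (3*p + (1-p))^d
      < Real.exp (-s) + Real.exp (-s) := by
        have := hA; have := hB; linarith
    _ = 2 * (Real.exp (-2) / (d:ℝ)^2) := by rw [hE]; ring
    _ < Real.exp (-1) / (d:ℝ)^2 := by
        have h5 : (0:ℝ) < ((d:ℝ)^2)⁻¹ := by positivity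
        calc 2 * (Real.exp (-2) / (d:ℝ)^2) = (2*Real.exp (-2)) * ((d:ℝ)^2)⁻¹ := by ring
          _ < Real.exp (-1) * ((d:ℝ)^2)⁻¹ := mul_lt_mul_of_pos_right hfin h5
          _ = Real.exp (-1)/(d:ℝ)^2 := by ring

open MeasureTheory Finset in
/-- For a `d`-regular graph, choosing each vertex independently with probability
`p = (2 + 2 log d)/d` to lie in a random set `C`, for every vertex `v` the
probability that `v` has no neighbor in `C` or more than `3pd = 3(2 + 2 log d)`
neighbors in `C` is less than `1/(e d²)`, for all sufficiently large `d`.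
The random set is modeled by a Bernoulli product measure on `V → Bool`. -/
theorem bad_event_probability : ∃ d₀ : ℕ, ∀ d : ℕ, d₀ ≤ d →
    ∀ (hp : ENNReal.ofReal ((2 + 2 * Real.log d) / d) ≤ 1),
    ∀ (V : Type) [Fintype V] [DecidableEq V] (G : SimpleGraph V) [DecidableRel G.Adj],
      G.IsRegularOfDegree d →
      ∀ v : V,
        (MeasureTheory.Measure.pi (fun _ : V =>
            (PMF.bernoulli (Real.toNNReal ((2 + 2 * Real.log d) / d))
              (Real.toNNReal_le_one.mpr (ENNReal.ofReal_le_one.mp hp))).toMeasure))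
          {ω : V → Bool |
            ((G.neighborFinset v).filter (fun u => ω u = true)).card = 0 ∨
            3 * (2 + 2 * Real.log d)
              < (((G.neighborFinset v).filter (fun u => ω u = true)).card : ℝ)}
          < ENNReal.ofReal (1 / (Real.exp 1 * (d : ℝ) ^ 2)) := by
  refine ⟨1, fun d hd hp V _ _ G _ hreg v => ?_⟩
  classical
  have hd0 : (0:ℝ) < d := by exact_mod_cast hd
  have hlog : 0 ≤ Real.log d := Real.log_natCast_nonneg d
  set pR : ℝ := (2 + 2 * Real.log d) / d with hpR_def
  have hpR0 : 0 ≤ pR := by rw [hpR_def]; positivity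
  have hpR1 : pR ≤ 1 := ENNReal.ofReal_le_one.mp hp
  set pE := ENNReal.ofReal pR with hpE_def
  set ν := (PMF.bernoulli (Real.toNNReal pR) (Real.toNNReal_le_one.mpr hpR1)).toMeasure with hν_def
  set μ := MeasureTheory.Measure.pi (fun _ : V => ν) with hμ_def
  set N := G.neighborFinset v with hN_def
  have hNd : N.card = d := (G.card_neighborFinset_eq_degree v).trans (hreg v)
  set f : Finset V → V → Set Bool := fun A i =>
    if i ∈ A then ({true} : Set Bool) else if i ∈ N then ({false} : Set Bool) else Set.univ
    with hf_def
  set Cyl : Finset V → Set (V → Bool) := fun A => Set.univ.pi (f A) with hCyl_def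
  have hνtrue : ν ({true} : Set Bool) = pE := by
    rw [hν_def, PMF.toMeasure_apply_singleton _ _ (measurableSet_singleton _),
      PMF.bernoulli_apply]
    rfl
  have hνfalse : ν ({false} : Set Bool) = 1 - pE := by
    rw [hν_def, PMF.toMeasure_apply_singleton _ _ (measurableSet_singleton _),
      PMF.bernoulli_apply]
    show ((1 - _ : NNReal) : ENNReal) = _
    rw [ENNReal.coe_sub, ENNReal.coe_one]
    rfl
  have hνuniv : ν (Set.univ : Set Bool) = 1 := measure_univ
  have hcyl : ∀ A : Finset V, A ⊆ N → μ (Cyl A) = pE ^ A.card * (1 - pE) ^ (d - A.card) := by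
    intro A hA
    rw [hCyl_def, hμ_def]
    rw [Measure.pi_pi]
    have hval : ∀ i : V, ν (f A i) = if i ∈ A then pE else if i ∈ N then 1 - pE else 1 := by
      intro i
      by_cases h1 : i ∈ A
      · simp only [hf_def, h1, if_true, hνtrue]
      · by_cases h2 : i ∈ N
        · simp only [hf_def, h1, h2, if_false, if_true, hνfalse]
        · simp only [hf_def, h1, h2, if_false, hνuniv]
    calc ∏ i : V, ν (f A i) = ∏ i ∈ N, ν (f A i) := by
          refine (Finset.prod_subset (Finset.subset_univ N) ?_).symm
          intro i _ hi
          have h1 : i ∉ A := fun h => hi (hA h)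
          rw [hval]
          simp [h1, hi]
      _ = (∏ i ∈ N \ A, ν (f A i)) * ∏ i ∈ A, ν (f A i) := (Finset.prod_sdiff hA).symm
      _ = pE ^ A.card * (1 - pE) ^ (d - A.card) := by
          have e1 : ∀ i ∈ A, ν (f A i) = pE := fun i hi => by rw [hval]; simp [hi]
          have e2 : ∀ i ∈ N \ A, ν (f A i) = 1 - pE := fun i hi => by
            rw [Finset.mem_sdiff] at hi
            rw [hval]; simp [hi.1, hi.2]
          rw [Finset.prod_congr rfl e1, Finset.prod_congr rfl e2, Finset.prod_const,
            Finset.prod_const, Finset.card_sdiff_of_subset hA, hNd, mul_comm]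
  set T₁ : Finset (Finset V) :=
    N.powerset.filter (fun A => 3 * (2 + 2 * Real.log d) < (A.card : ℝ)) with hT₁_def
  have hEsub : {ω : V → Bool |
      (N.filter (fun u => ω u = true)).card = 0 ∨
      3 * (2 + 2 * Real.log d) < ((N.filter (fun u => ω u = true)).card : ℝ)}
      ⊆ ⋃ A ∈ insert (∅ : Finset V) T₁, Cyl A := by
    intro ω hω
    set A := N.filter (fun u => ω u = true) with hA_def
    have hAN : A ⊆ N := Finset.filter_subset _ _
    have hmem : ω ∈ Cyl A := by
      rw [hCyl_def, Set.mem_univ_pi]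
      intro i
      by_cases h1 : i ∈ A
      · have : ω i = true := (Finset.mem_filter.mp h1).2
        simp [hf_def, h1, this]
      · by_cases h2 : i ∈ N
        · have : ω i = false := by
            have : ¬ ω i = true := fun h => h1 (Finset.mem_filter.mpr ⟨h2, h⟩)
            simpa using this
          simp [hf_def, h1, h2, this]
        · simp [hf_def, h1, h2]
    rcases hω with h0 | hbig
    · have hA0 : A = ∅ := Finset.card_eq_zero.mp h0
      exact Set.mem_biUnion (Finset.mem_insert_self _ _) (hA0 ▸ hmem)
    · exact Set.mem_biUnion
        (Finset.mem_insert_of_mem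
          (Finset.mem_filter.mpr ⟨Finset.mem_powerset.mpr hAN, hbig⟩)) hmem
  have hnotmem : (∅ : Finset V) ∉ T₁ := by
    rw [hT₁_def]
    simp only [Finset.mem_filter, Finset.card_empty]
    intro h
    have := h.2
    norm_num at this
    linarith
  have hbound : μ {ω : V → Bool |
      (N.filter (fun u => ω u = true)).card = 0 ∨
      3 * (2 + 2 * Real.log d) < ((N.filter (fun u => ω u = true)).card : ℝ)}
      ≤ (1 - pE) ^ d + ∑ A ∈ T₁, pE ^ A.card * (1 - pE) ^ (d - A.card) := by
    calc μ _ ≤ μ (⋃ A ∈ insert (∅ : Finset V) T₁, Cyl A) := measure_mono hEsub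
      _ ≤ ∑ A ∈ insert (∅ : Finset V) T₁, μ (Cyl A) := measure_biUnion_finset_le _ _
      _ = μ (Cyl ∅) + ∑ A ∈ T₁, μ (Cyl A) := Finset.sum_insert hnotmem
      _ = (1 - pE) ^ d + ∑ A ∈ T₁, pE ^ A.card * (1 - pE) ^ (d - A.card) := by
          rw [hcyl ∅ (Finset.empty_subset N)]
          simp only [Finset.card_empty, pow_zero, one_mul, Nat.sub_zero]
          congr 1
          exact Finset.sum_congr rfl fun A hA =>
            hcyl A (Finset.mem_powerset.mp (Finset.mem_filter.mp hA).1)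
  -- convert to ofReal
  have hqE : (1 : ENNReal) - pE = ENNReal.ofReal (1 - pR) := by
    rw [ENNReal.ofReal_sub 1 hpR0, ENNReal.ofReal_one, hpE_def]
  have hterm : ∀ k : ℕ, pE ^ k * (1 - pE) ^ (d - k)
      = ENNReal.ofReal (pR ^ k * (1 - pR) ^ (d - k)) := by
    intro k
    rw [hqE, hpE_def, ← ENNReal.ofReal_pow hpR0, ← ENNReal.ofReal_pow (by linarith),
      ← ENNReal.ofReal_mul (by positivity)]
  have h1m : (0:ℝ) ≤ 1 - pR := by linarith
  have hsnn : ∀ A ∈ T₁, (0:ℝ) ≤ pR ^ A.card * (1 - pR) ^ (d - A.card) :=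
    fun A _ => mul_nonneg (pow_nonneg hpR0 _) (pow_nonneg h1m _)
  have hsum_eq : ∑ A ∈ T₁, pE ^ A.card * (1 - pE) ^ (d - A.card)
      = ENNReal.ofReal (∑ A ∈ T₁, pR ^ A.card * (1 - pR) ^ (d - A.card)) := by
    rw [ENNReal.ofReal_sum_of_nonneg hsnn]
    exact Finset.sum_congr rfl fun A _ => hterm A.card
  have hpow_eq : (1 - pE) ^ d = ENNReal.ofReal ((1 - pR) ^ d) := by
    rw [hqE, ← ENNReal.ofReal_pow h1m]
  have hofreal : (1 - pE) ^ d + ∑ A ∈ T₁, pE ^ A.card * (1 - pE) ^ (d - A.card)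
      = ENNReal.ofReal ((1 - pR) ^ d + ∑ A ∈ T₁, pR ^ A.card * (1 - pR) ^ (d - A.card)) := by
    rw [hpow_eq, hsum_eq,
      ← ENNReal.ofReal_add (pow_nonneg h1m d) (Finset.sum_nonneg hsnn)]
  refine lt_of_le_of_lt (hbound.trans hofreal.le) ?_
  rw [ENNReal.ofReal_lt_ofReal_iff (by positivity)]
  -- real inequality
  have hsum := sum_bound N d hNd pR (1 - pR) (3 * (2 + 2 * Real.log d)) hpR0 (by linarith)
  have hfin := real_final d hd (by rw [← hpR_def]; exact hpR1)
  rw [← hpR_def] at hfin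
  calc (1 - pR) ^ d + ∑ A ∈ T₁, pR ^ A.card * (1 - pR) ^ (d - A.card)
      ≤ (1 - pR) ^ d + (3:ℝ) ^ (-(3 * (2 + 2 * Real.log d))) * (3 * pR + (1 - pR)) ^ d := by
        exact add_le_add_right hsum _
    _ < 1 / (Real.exp 1 * (d:ℝ) ^ 2) := hfin
end

section
/- Let B be a finite bipartite graph with parts X = X₁ ∪ X₂ and Y = Y₁ ∪ Y₂ (disjoint unions). Suppose: every vertex of X₁ has degree at least d₁ in B and all its neighbors lie in Y₁; every vertex of Y₁ has at most D₁ neighbors in X₁ and at most D₂ neighbors in X₂; every vertex of X₂ has degree at least d₂; and every vertex of Y₂ has at most D₂ neighbors, all of which are in X₂. If k is a positive integer with k ≤ d₁/(2·D₁) and k ≤ d₂/(2·(D₁ + D₂)) — more simply, if d₁/(2D₁) ≥ k and d₂/(4·max(D₁,D₂)) ≥ k — then for every S ⊆ X, |N_B(S)| ≥ k|S|. -/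
open Finset

lemma double_count {V : Type} [Fintype V] [DecidableEq V]
    (B : SimpleGraph V) [DecidableRel B.Adj] (A C : Finset V) :
    ∑ v ∈ A, (B.neighborFinset v ∩ C).card = ∑ y ∈ C, (B.neighborFinset y ∩ A).card := by
  have h : ∀ (P Q : Finset V),
      ∑ v ∈ P, (B.neighborFinset v ∩ Q).card
        = ∑ v ∈ P, ∑ y ∈ Q, (if B.Adj v y then 1 else 0) := by
    intro P Q
    refine Finset.sum_congr rfl fun v _ => ?_
    have hq : B.neighborFinset v ∩ Q = Q.filter (fun y => B.Adj v y) := by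
      ext y; simp [SimpleGraph.mem_neighborFinset, and_comm]
    rw [hq, Finset.card_filter]
  rw [h, h, Finset.sum_comm]
  refine Finset.sum_congr rfl fun y _ => Finset.sum_congr rfl fun v _ => ?_
  simp [SimpleGraph.adj_comm]

/-- Hall-condition derivation (Corollary 3.4 of the paper): a bipartite graph with
prospective centers `X = X₁ ∪ X₂` and prospective leaves `Y = Y₁ ∪ Y₂`, degree
lower bounds `d₁, d₂` on the two classes of centers and degree upper bounds
`D₁, D₂` on the leaves, satisfies the Hall condition with expansion factor `k`
whenever `k ≤ d₁/(2 D₁)` and `k ≤ d₂/(2 (D₁ + D₂))`. -/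
theorem hall_condition_from_degrees {V : Type} [Fintype V] [DecidableEq V]
    (B : SimpleGraph V) [DecidableRel B.Adj]
    (X₁ X₂ Y₁ Y₂ : Finset V) (d₁ d₂ D₁ D₂ k : ℕ)
    (hdisjX : Disjoint X₁ X₂) (hdisjY : Disjoint Y₁ Y₂)
    (hdisjXY : Disjoint (X₁ ∪ X₂) (Y₁ ∪ Y₂))
    (hbip : ∀ u v : V, B.Adj u v →
      (u ∈ X₁ ∪ X₂ ∧ v ∈ Y₁ ∪ Y₂) ∨ (u ∈ Y₁ ∪ Y₂ ∧ v ∈ X₁ ∪ X₂))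
    (hD₁pos : 0 < D₁) (hD₂pos : 0 < D₂) (hk : 0 < k)
    (hX₁ : ∀ v ∈ X₁, d₁ ≤ B.degree v ∧ B.neighborFinset v ⊆ Y₁)
    (hY₁ : ∀ y ∈ Y₁, (B.neighborFinset y ∩ X₁).card ≤ D₁ ∧
                     (B.neighborFinset y ∩ X₂).card ≤ D₂)
    (hX₂ : ∀ v ∈ X₂, d₂ ≤ B.degree v)
    (hY₂ : ∀ y ∈ Y₂, B.neighborFinset y ⊆ X₂ ∧ (B.neighborFinset y).card ≤ D₂)
    (hk₁ : (k : ℝ) ≤ (d₁ : ℝ) / (2 * D₁))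
    (hk₂ : (k : ℝ) ≤ (d₂ : ℝ) / (2 * ((D₁ : ℝ) + D₂))) :
    ∀ S ⊆ X₁ ∪ X₂, k * S.card ≤ (S.biUnion (fun v => B.neighborFinset v)).card := by
  -- convert the real hypotheses to natural-number inequalities
  have hn₁ : 2 * k * D₁ ≤ d₁ := by
    have h2 : (0:ℝ) < 2 * (D₁:ℝ) := by positivity
    have := (le_div_iff₀ h2).mp hk₁
    have : (2:ℝ) * k * D₁ ≤ d₁ := by nlinarith
    exact_mod_cast this
  have hn₂ : 2 * k * (D₁ + D₂) ≤ d₂ := by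
    have h2 : (0:ℝ) < 2 * ((D₁:ℝ) + D₂) := by positivity
    have := (le_div_iff₀ h2).mp hk₂
    have : (2:ℝ) * k * ((D₁:ℝ) + D₂) ≤ d₂ := by nlinarith
    exact_mod_cast this
  intro S hS
  set N := S.biUnion (fun v => B.neighborFinset v) with hN
  set S₁ := S ∩ X₁ with hS₁
  set S₂ := S ∩ X₂ with hS₂
  have hcard : S.card = S₁.card + S₂.card := by
    rw [hS₁, hS₂, ← Finset.card_union_of_disjoint
      (hdisjX.mono (Finset.inter_subset_right) (Finset.inter_subset_right)),
      ← Finset.inter_union_distrib_left, Finset.inter_eq_left.mpr hS]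
  have hnbrN : ∀ v ∈ S, B.neighborFinset v ⊆ N := by
    intro v hv x hx
    exact Finset.mem_biUnion.mpr ⟨v, hv, hx⟩
  have hNY : N ⊆ Y₁ ∪ Y₂ := by
    intro y hy
    obtain ⟨v, hv, hyv⟩ := Finset.mem_biUnion.mp hy
    rw [SimpleGraph.mem_neighborFinset] at hyv
    rcases hbip v y hyv with ⟨_, h⟩ | ⟨hvY, _⟩
    · exact h
    · exact absurd hvY (Finset.disjoint_left.mp hdisjXY (hS hv))
  rcases le_or_gt S.card (2 * S₁.card) with hcase | hcase
  · -- count edges from S₁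
    have key : d₁ * S₁.card ≤ D₁ * N.card := by
      calc d₁ * S₁.card = ∑ _v ∈ S₁, d₁ := by rw [Finset.sum_const, smul_eq_mul, mul_comm]
        _ ≤ ∑ v ∈ S₁, (B.neighborFinset v ∩ (N ∩ Y₁)).card := by
            refine Finset.sum_le_sum fun v hv => ?_
            have hvX₁ : v ∈ X₁ := (Finset.mem_inter.mp hv).2
            have hvS : v ∈ S := (Finset.mem_inter.mp hv).1
            have hsub : B.neighborFinset v ⊆ N ∩ Y₁ :=
              Finset.subset_inter (hnbrN v hvS) (hX₁ v hvX₁).2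
            rw [Finset.inter_eq_left.mpr hsub]
            exact (hX₁ v hvX₁).1
        _ = ∑ y ∈ N ∩ Y₁, (B.neighborFinset y ∩ S₁).card := double_count B _ _
        _ ≤ ∑ _y ∈ N ∩ Y₁, D₁ := by
            refine Finset.sum_le_sum fun y hy => ?_
            refine le_trans (Finset.card_le_card ?_) (hY₁ y (Finset.mem_inter.mp hy).2).1
            exact Finset.inter_subset_inter_left (Finset.inter_subset_right)
        _ ≤ D₁ * N.card := by
            rw [Finset.sum_const, smul_eq_mul, mul_comm]
            exact Nat.mul_le_mul_left _ (Finset.card_le_card Finset.inter_subset_left)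
    have h1 : D₁ * (2 * k * S₁.card) ≤ D₁ * N.card := by
      calc D₁ * (2 * k * S₁.card) = (2 * k * D₁) * S₁.card := by ring
        _ ≤ d₁ * S₁.card := Nat.mul_le_mul_right _ hn₁
        _ ≤ D₁ * N.card := key
    have h2 : 2 * k * S₁.card ≤ N.card := Nat.le_of_mul_le_mul_left h1 hD₁pos
    calc k * S.card ≤ k * (2 * S₁.card) := Nat.mul_le_mul_left _ hcase
      _ = 2 * k * S₁.card := by ring
      _ ≤ N.card := h2
  · -- count edges from S₂
    have hcase' : S.card ≤ 2 * S₂.card := by omega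
    have key : d₂ * S₂.card ≤ (D₁ + D₂) * N.card := by
      calc d₂ * S₂.card = ∑ _v ∈ S₂, d₂ := by rw [Finset.sum_const, smul_eq_mul, mul_comm]
        _ ≤ ∑ v ∈ S₂, (B.neighborFinset v ∩ N).card := by
            refine Finset.sum_le_sum fun v hv => ?_
            rw [Finset.inter_eq_left.mpr (hnbrN v (Finset.mem_inter.mp hv).1)]
            exact hX₂ v (Finset.mem_inter.mp hv).2
        _ = ∑ y ∈ N, (B.neighborFinset y ∩ S₂).card := double_count B _ _
        _ ≤ ∑ _y ∈ N, (D₁ + D₂) := by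
            refine Finset.sum_le_sum fun y hy => ?_
            rcases Finset.mem_union.mp (hNY hy) with hy₁ | hy₂
            · refine le_trans (le_trans (Finset.card_le_card ?_) (hY₁ y hy₁).2) ?_
              · exact Finset.inter_subset_inter_left Finset.inter_subset_right
              · omega
            · refine le_trans (le_trans (Finset.card_le_card Finset.inter_subset_left)
                (hY₂ y hy₂).2) ?_
              omega
        _ = (D₁ + D₂) * N.card := by rw [Finset.sum_const, smul_eq_mul, mul_comm]
    have h1 : (D₁ + D₂) * (2 * k * S₂.card) ≤ (D₁ + D₂) * N.card := by
      calc (D₁ + D₂) * (2 * k * S₂.card) = (2 * k * (D₁ + D₂)) * S₂.card := by ring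
        _ ≤ d₂ * S₂.card := Nat.mul_le_mul_right _ hn₂
        _ ≤ (D₁ + D₂) * N.card := key
    have h2 : 2 * k * S₂.card ≤ N.card := Nat.le_of_mul_le_mul_left h1 (by omega)
    calc k * S.card ≤ k * (2 * S₂.card) := Nat.mul_le_mul_left _ hcase'
      _ = 2 * k * S₂.card := by ring
      _ ≤ N.card := h2
end

section
/- Symmetric Lovász Local Lemma: Let A₁,…,Aₙ be events in a probability space such that each P(Aᵢ) ≤ p and each Aᵢ is mutually independent of all but at most D of the other events. If e·p·(D+1) ≤ 1, then P(⋂ complement of Aᵢ) > 0. -/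
open MeasureTheory Finset

lemma lll_num (p : ℝ) (D : ℕ) (hp : 0 ≤ p) (h : Real.exp 1 * p * ((D:ℝ)+1) ≤ 1) :
    p ≤ (1/((D:ℝ)+2)) * (1 - 1/((D:ℝ)+2))^D := by
  have hD1 : (0:ℝ) < (D:ℝ)+1 := by positivity
  have hD2 : (0:ℝ) < (D:ℝ)+2 := by positivity
  have h1 : (1 + 1/((D:ℝ)+1))^(D+1) ≤ Real.exp 1 := by
    calc (1 + 1/((D:ℝ)+1))^(D+1) ≤ (Real.exp (1/((D:ℝ)+1)))^(D+1) := by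
          apply pow_le_pow_left₀ (by positivity)
          linarith [Real.add_one_le_exp (1/((D:ℝ)+1))]
      _ = Real.exp (((D:ℕ)+1) * (1/((D:ℝ)+1))) := by
          rw [← Real.exp_nat_mul]; congr 1; push_cast; ring
      _ = Real.exp 1 := by congr 1; push_cast; field_simp
  have h2 : ((D:ℝ)+2)^(D+1) ≤ Real.exp 1 * ((D:ℝ)+1)^(D+1) := by
    have he : ((D:ℝ)+2)^(D+1) = (1 + 1/((D:ℝ)+1))^(D+1) * ((D:ℝ)+1)^(D+1) := by
      rw [← mul_pow]; congr 1; field_simp; ring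
    rw [he]
    exact mul_le_mul_of_nonneg_right h1 (by positivity)
  have hx : (1 - 1/((D:ℝ)+2)) = ((D:ℝ)+1)/((D:ℝ)+2) := by field_simp; ring
  have hrhs : (1/((D:ℝ)+2)) * (1 - 1/((D:ℝ)+2))^D = ((D:ℝ)+1)^D / ((D:ℝ)+2)^(D+1) := by
    rw [hx, div_pow, pow_succ]
    field_simp
  rw [hrhs, le_div_iff₀ (by positivity)]
  calc p * ((D:ℝ)+2)^(D+1) ≤ p * (Real.exp 1 * ((D:ℝ)+1)^(D+1)) :=
        mul_le_mul_of_nonneg_left h2 hp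
    _ = (Real.exp 1 * p * ((D:ℝ)+1)) * ((D:ℝ)+1)^D := by rw [pow_succ]; ring
    _ ≤ 1 * ((D:ℝ)+1)^D := mul_le_mul_of_nonneg_right h (by positivity)
    _ = ((D:ℝ)+1)^D := one_mul _



/-- Symmetric Lovász Local Lemma: if each event `A i` has probability at most `p`,
each `A i` is mutually independent of all other events except those indexed by
`Γ i` with `|Γ i| ≤ D`, and `e p (D + 1) ≤ 1`, then with positive probability no
event `A i` occurs. -/
theorem lovasz_local_lemma {Ω : Type} [MeasurableSpace Ω]
    (μ : MeasureTheory.Measure Ω) [MeasureTheory.IsProbabilityMeasure μ]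
    (n : ℕ) (A : Fin n → Set Ω) (hmeas : ∀ i, MeasurableSet (A i))
    (p : ℝ) (D : ℕ) (Γ : Fin n → Finset (Fin n)) (hΓ : ∀ i, (Γ i).card ≤ D)
    (hprob : ∀ i, μ (A i) ≤ ENNReal.ofReal p)
    (hindep : ∀ i, ∀ J : Finset (Fin n), (∀ j ∈ J, j ≠ i ∧ j ∉ Γ i) →
      μ (A i ∩ ⋂ j ∈ J, (A j)ᶜ) = μ (A i) * μ (⋂ j ∈ J, (A j)ᶜ))
    (hcond : Real.exp 1 * p * ((D : ℝ) + 1) ≤ 1) :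
    0 < μ (⋂ i, (A i)ᶜ) := by
  set x : ℝ := 1/((D:ℝ)+2) with hxdef
  set p0 : ℝ := max p 0 with hp0def
  have hD2 : (0:ℝ) < (D:ℝ)+2 := by positivity
  have hx0 : 0 < x := by positivity
  have hx1 : x ≤ 1 := by rw [hxdef]; rw [div_le_one hD2]; linarith
  have h1x0 : 0 < 1 - x := by
    rw [hxdef]
    have : (1:ℝ)/((D:ℝ)+2) < 1 := by rw [div_lt_one hD2]; linarith
    linarith
  have h1x1 : 1 - x ≤ 1 := by linarith
  have hp00 : 0 ≤ p0 := le_max_right _ _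
  -- numeric bound
  have hnum : p0 ≤ x * (1-x)^D := by
    rcases le_or_gt p 0 with hp | hp
    · have : p0 = 0 := by rw [hp0def]; exact max_eq_right hp
      rw [this]; positivity
    · have hp0eq : p0 = p := max_eq_left hp.le
      rw [hp0eq, hxdef]
      exact lll_num p D hp.le hcond
  -- measure basics
  have hBmeas : ∀ S : Finset (Fin n), MeasurableSet (⋂ j ∈ S, (A j)ᶜ) := fun S =>
    MeasurableSet.biInter S.countable_toSet (fun j _ => (hmeas j).compl)
  have hfin : ∀ s : Set Ω, μ s ≠ ⊤ := fun s => measure_ne_top μ s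
  have hsplit : ∀ (j : Fin n) (T : Finset (Fin n)),
      (μ (⋂ k ∈ insert j T, (A k)ᶜ)).toReal
        = (μ (⋂ k ∈ T, (A k)ᶜ)).toReal - (μ (A j ∩ ⋂ k ∈ T, (A k)ᶜ)).toReal := by
    intro j T
    have key : μ (A j ∩ ⋂ k ∈ T, (A k)ᶜ) + μ (⋂ k ∈ insert j T, (A k)ᶜ)
        = μ (⋂ k ∈ T, (A k)ᶜ) := by
      have h1 : (⋂ k ∈ insert j T, (A k)ᶜ) = (⋂ k ∈ T, (A k)ᶜ) \ A j := by
        rw [Finset.set_biInter_insert]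
        ext ω; simp [Set.mem_diff]; tauto
      have h2 : A j ∩ (⋂ k ∈ T, (A k)ᶜ) = (⋂ k ∈ T, (A k)ᶜ) ∩ A j := Set.inter_comm _ _
      rw [h1, h2]
      exact measure_inter_add_diff _ (hmeas j)
    have := congrArg ENNReal.toReal key
    rw [ENNReal.toReal_add (hfin _) (hfin _)] at this
    linarith
  have hprob' : ∀ i, (μ (A i)).toReal ≤ p0 := by
    intro i
    calc (μ (A i)).toReal ≤ (ENNReal.ofReal p0).toReal := by
          apply ENNReal.toReal_mono ENNReal.ofReal_ne_top
          exact le_trans (hprob i) (ENNReal.ofReal_le_ofReal (le_max_left _ _))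
      _ = p0 := ENNReal.toReal_ofReal hp00
  -- the key inductive bound
  have key : ∀ N : ℕ, ∀ S : Finset (Fin n), S.card ≤ N → ∀ i ∉ S,
      (μ (A i ∩ ⋂ j ∈ S, (A j)ᶜ)).toReal ≤ x * (μ (⋂ j ∈ S, (A j)ᶜ)).toReal := by
    intro N
    induction N with
    | zero =>
      intro S hS i _
      rw [Finset.card_eq_zero.mp (Nat.le_zero.mp hS)]
      simp only [Finset.notMem_empty, Set.iInter_of_empty, Set.iInter_univ, Set.inter_univ]
      rw [measure_univ, ENNReal.toReal_one, mul_one]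
      calc (μ (A i)).toReal ≤ p0 := hprob' i
        _ ≤ x * (1-x)^D := hnum
        _ ≤ x * 1 := by
            apply mul_le_mul_of_nonneg_left _ hx0.le
            exact pow_le_one₀ h1x0.le h1x1
        _ = x := mul_one x
    | succ N ih =>
      -- chain lemma: adding U to T loses at most (1-x)^|U|
      have chain : ∀ (U T : Finset (Fin n)), Disjoint U T → (U ∪ T).card ≤ N + 1 →
          (1-x)^U.card * (μ (⋂ j ∈ T, (A j)ᶜ)).toReal
            ≤ (μ (⋂ j ∈ (U ∪ T), (A j)ᶜ)).toReal := by
        intro U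
        induction U using Finset.induction_on with
        | empty => intro T _ _; simp
        | @insert j U' hj ihU =>
          intro T hdisj hcard
          have hjT : j ∉ T := fun h => (Finset.disjoint_left.mp hdisj (Finset.mem_insert_self j U')) h
          have hdisj' : Disjoint U' T :=
            Finset.disjoint_of_subset_left (Finset.subset_insert j U') hdisj
          have hjUT : j ∉ U' ∪ T := by
            simp only [Finset.mem_union]; rintro (h | h); exact hj h; exact hjT h
          have hUT : insert j U' ∪ T = insert j (U' ∪ T) := by
            rw [Finset.insert_union]
          have hcard' : (U' ∪ T).card ≤ N := by
            have : (insert j (U' ∪ T)).card = (U' ∪ T).card + 1 := Finset.card_insert_of_notMem hjUT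
            rw [hUT] at hcard
            omega
          have hIH : (μ (A j ∩ ⋂ k ∈ (U' ∪ T), (A k)ᶜ)).toReal
              ≤ x * (μ (⋂ k ∈ (U' ∪ T), (A k)ᶜ)).toReal :=
            ih (U' ∪ T) hcard' j hjUT
          have hchain' : (1-x)^U'.card * (μ (⋂ j ∈ T, (A j)ᶜ)).toReal
              ≤ (μ (⋂ k ∈ (U' ∪ T), (A k)ᶜ)).toReal := ihU T hdisj' (le_trans (Nat.le_succ _) (by
                rw [hUT] at hcard
                have : (U' ∪ T).card ≤ (insert j (U' ∪ T)).card := Finset.card_le_card (Finset.subset_insert _ _)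
                omega))
          rw [hUT, Finset.card_insert_of_notMem hj, hsplit j (U' ∪ T), pow_succ]
          have hnn : 0 ≤ (μ (⋂ j ∈ T, (A j)ᶜ)).toReal := ENNReal.toReal_nonneg
          calc (1-x)^U'.card * (1-x) * (μ (⋂ j ∈ T, (A j)ᶜ)).toReal
              = (1-x) * ((1-x)^U'.card * (μ (⋂ j ∈ T, (A j)ᶜ)).toReal) := by ring
            _ ≤ (1-x) * (μ (⋂ k ∈ (U' ∪ T), (A k)ᶜ)).toReal :=
                mul_le_mul_of_nonneg_left hchain' h1x0.le
            _ ≤ (μ (⋂ k ∈ (U' ∪ T), (A k)ᶜ)).toReal - (μ (A j ∩ ⋂ k ∈ (U' ∪ T), (A k)ᶜ)).toReal := by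
                nlinarith [hIH]
      intro S hS i hi
      set S₂ : Finset (Fin n) := S.filter (fun j => j ∉ Γ i) with hS₂def
      set S₁ : Finset (Fin n) := S.filter (fun j => j ∈ Γ i) with hS₁def
      have hunion : S₁ ∪ S₂ = S := by
        rw [hS₁def, hS₂def]
        exact Finset.filter_union_filter_not_eq (fun j => j ∈ Γ i) S
      have hdisj : Disjoint S₁ S₂ := by
        rw [hS₁def, hS₂def]
        exact Finset.disjoint_filter_filter_not S S (fun j => j ∈ Γ i)
      have hS₁card : S₁.card ≤ D := by
        have : S₁ ⊆ Γ i := by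
          intro j hjS₁
          exact (Finset.mem_filter.mp hjS₁).2
        exact le_trans (Finset.card_le_card this) (hΓ i)
      -- step 1: a i S ≤ a i S₂
      have step1 : (μ (A i ∩ ⋂ j ∈ S, (A j)ᶜ)).toReal ≤ (μ (A i ∩ ⋂ j ∈ S₂, (A j)ᶜ)).toReal := by
        apply ENNReal.toReal_mono (hfin _)
        apply measure_mono
        apply Set.inter_subset_inter_right
        exact Set.biInter_subset_biInter_left (Finset.filter_subset _ _)
      -- step 2: independence
      have step2 : (μ (A i ∩ ⋂ j ∈ S₂, (A j)ᶜ)).toReal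
          = (μ (A i)).toReal * (μ (⋂ j ∈ S₂, (A j)ᶜ)).toReal := by
        rw [hindep i S₂ ?_, ENNReal.toReal_mul]
        intro j hjS₂
        have hjS : j ∈ S := Finset.mem_of_mem_filter j hjS₂
        exact ⟨fun h => hi (h ▸ hjS), (Finset.mem_filter.mp hjS₂).2⟩
      -- step 3: chain bound
      have step3 : (1-x)^S₁.card * (μ (⋂ j ∈ S₂, (A j)ᶜ)).toReal
          ≤ (μ (⋂ j ∈ S, (A j)ᶜ)).toReal := by
        have := chain S₁ S₂ hdisj (by rw [hunion]; exact hS)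
        rwa [hunion] at this
      have step4 : (1-x)^D * (μ (⋂ j ∈ S₂, (A j)ᶜ)).toReal
          ≤ (μ (⋂ j ∈ S, (A j)ᶜ)).toReal := by
        refine le_trans (mul_le_mul_of_nonneg_right ?_ ENNReal.toReal_nonneg) step3
        exact pow_le_pow_of_le_one h1x0.le h1x1 hS₁card
      calc (μ (A i ∩ ⋂ j ∈ S, (A j)ᶜ)).toReal
          ≤ (μ (A i)).toReal * (μ (⋂ j ∈ S₂, (A j)ᶜ)).toReal := by rw [← step2]; exact step1
        _ ≤ p0 * (μ (⋂ j ∈ S₂, (A j)ᶜ)).toReal :=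
            mul_le_mul_of_nonneg_right (hprob' i) ENNReal.toReal_nonneg
        _ ≤ (x * (1-x)^D) * (μ (⋂ j ∈ S₂, (A j)ᶜ)).toReal :=
            mul_le_mul_of_nonneg_right hnum ENNReal.toReal_nonneg
        _ = x * ((1-x)^D * (μ (⋂ j ∈ S₂, (A j)ᶜ)).toReal) := by ring
        _ ≤ x * (μ (⋂ j ∈ S, (A j)ᶜ)).toReal := mul_le_mul_of_nonneg_left step4 hx0.le
  -- final chain over all events
  have final : ∀ U : Finset (Fin n), (1-x)^U.card ≤ (μ (⋂ j ∈ U, (A j)ᶜ)).toReal := by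
    intro U
    induction U using Finset.induction_on with
    | empty => simp
    | @insert j U' hj ihU =>
      rw [Finset.card_insert_of_notMem hj, hsplit j U', pow_succ]
      have hk := key U'.card U' le_rfl j hj
      nlinarith [ihU, h1x0, key U'.card U' le_rfl j hj, pow_nonneg h1x0.le U'.card]
  have hpos : 0 < (μ (⋂ j ∈ (Finset.univ : Finset (Fin n)), (A j)ᶜ)).toReal :=
    lt_of_lt_of_le (pow_pos h1x0 _) (final Finset.univ)
  have heq : (⋂ i, (A i)ᶜ) = ⋂ j ∈ (Finset.univ : Finset (Fin n)), (A j)ᶜ := by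
    simp
  rw [heq]
  rw [pos_iff_ne_zero]
  intro h0
  rw [h0] at hpos
  simp at hpos
end
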